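/- arXiv:2403.08697 — 5 statements merged into one kernel-verified Lean document; each statement's English description precedes it below -/
import Mathlib

section
/- Write q(b₀,b₁,b₂,b₃,b₄)(x,y) = Σ_{i=0}^4 C(4,i)·b_i·x^{4-i}y^i. An element p of the cone (Σ_{2,4}^2)* is extremal (that is, p ≠ 0 and whenever p = q₁ + q₂ with q₁, q₂ ∈ (Σ_{2,4}^2)*, both q₁ and q₂ are nonnegative scalar multiples of p) if and only if p is a positive multiple of x⁴, of y⁴, or of q(r², ε₁·r·t, t², ε₂·s·t, s²)(x,y) for some reals r > 0, s > 0, 0 < t ≤ √(rs), and signs ε₁, ε₂ ∈ {+1, −1}. -/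
open MvPolynomial Finset

set_option maxHeartbeats 2000000

/-- The Fischer inner product of two binary quartic forms (`n = 2`, `2d = 4`). -/
noncomputable def fischer4 (p q : MvPolynomial (Fin 2) ℝ) : ℝ :=
  ∑ i ∈ p.support ∪ q.support,
    (((∏ j, Nat.factorial (i j) : ℕ) : ℝ) / (Nat.factorial 4 : ℝ)) *
      coeff i p * coeff i q

/-- The dual cone `(Σ_{2,4}^2)*` of binary quartic forms. -/
def DualSigma24_2 : Set (MvPolynomial (Fin 2) ℝ) :=
  { p | p.IsHomogeneous 4 ∧
      ∀ h : MvPolynomial (Fin 2) ℝ, h.IsHomogeneous 2 → h.support.card ≤ 2 →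
        0 ≤ fischer4 p (h ^ 2) }

/-- `q(b₀,…,b₄)(x,y) = Σ_{i=0}^4 C(4,i)·b_i·x^{4-i}·y^i`. -/
noncomputable def qform (b : Fin 5 → ℝ) : MvPolynomial (Fin 2) ℝ :=
  ∑ i : Fin 5, C ((Nat.choose 4 (i : ℕ) : ℝ) * b i) * X 0 ^ (4 - (i : ℕ)) * X 1 ^ (i : ℕ)


noncomputable def mexp (j k : ℕ) : Fin 2 →₀ ℕ := Finsupp.single 0 j + Finsupp.single 1 k

lemma mexp_apply0 (j k : ℕ) : mexp j k 0 = j := by simp [mexp]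
lemma mexp_apply1 (j k : ℕ) : mexp j k 1 = k := by simp [mexp]

lemma CXX_eq_monomial (a : ℝ) (j k : ℕ) :
    C a * X (0 : Fin 2) ^ j * X 1 ^ k = monomial (mexp j k) a := by
  rw [C_mul_X_pow_eq_monomial, mexp]
  rw [show (X (1:Fin 2) ^ k : MvPolynomial (Fin 2) ℝ) = monomial (Finsupp.single 1 k) 1 by
    rw [← C_mul_X_pow_eq_monomial, map_one, one_mul]]
  rw [monomial_mul, mul_one]

lemma qform_eq (b : Fin 5 → ℝ) :
    qform b = ∑ i : Fin 5, monomial (mexp (4 - (i:ℕ)) (i:ℕ)) ((Nat.choose 4 (i : ℕ) : ℝ) * b i) := by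
  unfold qform
  exact Finset.sum_congr rfl fun i _ => CXX_eq_monomial _ _ _

lemma coeff_qform (b : Fin 5 → ℝ) (i : Fin 5) :
    coeff (mexp (4 - (i:ℕ)) (i:ℕ)) (qform b) = (Nat.choose 4 (i : ℕ) : ℝ) * b i := by
  rw [qform_eq]
  rw [coeff_sum]
  rw [Finset.sum_eq_single i]
  · simp [coeff_monomial]
  · intro j _ hji
    rw [coeff_monomial, if_neg]
    intro h
    apply hji
    have h1 : (j:ℕ) = (i:ℕ) := by
      have := congrArg (fun f => f 1) h
      simpa [mexp_apply1] using this
    exact Fin.ext h1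
  · simp

lemma degree_eq (d : Fin 2 →₀ ℕ) : Finsupp.degree d = d 0 + d 1 := by
  rw [Finsupp.degree_apply, Finset.sum_subset (Finset.subset_univ d.support)]
  · simp [Fin.sum_univ_two]
  · intro x _ hx; simpa using hx

lemma eq_mexp (d : Fin 2 →₀ ℕ) : d = mexp (d 0) (d 1) := by
  ext j
  fin_cases j
  · simp [mexp_apply0]
  · simp [mexp_apply1]

lemma mexp_degree (j k : ℕ) : Finsupp.degree (mexp j k) = j + k := by
  rw [degree_eq, mexp_apply0, mexp_apply1]

lemma qform_homog (b : Fin 5 → ℝ) : (qform b).IsHomogeneous 4 := by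
  rw [qform_eq]
  apply MvPolynomial.IsHomogeneous.sum
  intro i _
  apply isHomogeneous_monomial
  rw [mexp_degree]
  omega


lemma choose_ne (i : Fin 5) : (Nat.choose 4 (i:ℕ) : ℝ) ≠ 0 := by
  have : 0 < Nat.choose 4 (i:ℕ) := Nat.choose_pos (by omega)
  exact_mod_cast this.ne'

lemma homog4_rep (p : MvPolynomial (Fin 2) ℝ) (hp : p.IsHomogeneous 4) :
    p = qform (fun i => coeff (mexp (4 - (i:ℕ)) (i:ℕ)) p / (Nat.choose 4 (i:ℕ) : ℝ)) := by
  ext d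
  by_cases hd : Finsupp.degree d = 4
  · have hd1 : d 1 ≤ 4 := by rw [degree_eq] at hd; omega
    set i : Fin 5 := ⟨d 1, by omega⟩ with hi
    have hdi : d = mexp (4 - (i:ℕ)) (i:ℕ) := by
      rw [eq_mexp d]
      congr 1
      rw [degree_eq] at hd; simp [hi]; omega
    rw [hdi, coeff_qform]
    rw [mul_div_cancel₀ _ (choose_ne i)]
  · rw [hp.coeff_eq_zero hd, (qform_homog _).coeff_eq_zero hd]

lemma qform_inj {b b' : Fin 5 → ℝ} (h : qform b = qform b') : b = b' := by
  funext i
  have := congrArg (coeff (mexp (4 - (i:ℕ)) (i:ℕ))) h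
  rw [coeff_qform, coeff_qform] at this
  exact mul_left_cancel₀ (choose_ne i) this

lemma qform_add (b b' : Fin 5 → ℝ) : qform (b + b') = qform b + qform b' := by
  unfold qform
  rw [← Finset.sum_add_distrib]
  apply Finset.sum_congr rfl
  intro i _
  rw [Pi.add_apply, mul_add, C_add]
  ring

lemma qform_smul (k : ℝ) (b : Fin 5 → ℝ) : qform (k • b) = k • qform b := by
  unfold qform
  rw [Finset.smul_sum]
  apply Finset.sum_congr rfl
  intro i _
  rw [Pi.smul_apply, smul_eq_mul, smul_eq_C_mul]
  rw [show (Nat.choose 4 (i:ℕ) : ℝ) * (k * b i) = k * ((Nat.choose 4 (i:ℕ)) * b i) by ring]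
  rw [C_mul]
  ring

noncomputable def Sset : Finset (Fin 2 →₀ ℕ) :=
  Finset.univ.image (fun i : Fin 5 => mexp (4 - (i:ℕ)) (i:ℕ))

lemma supp_sub (b : Fin 5 → ℝ) : (qform b).support ⊆ Sset := by
  intro d hd
  have hcoeff : coeff d (qform b) ≠ 0 := mem_support_iff.mp hd
  have hdeg : Finsupp.degree d = 4 := by
    by_contra h
    exact hcoeff ((qform_homog b).coeff_eq_zero h)
  have hd1 : d 1 ≤ 4 := by rw [degree_eq] at hdeg; omega
  rw [Sset, Finset.mem_image]
  refine ⟨⟨d 1, by omega⟩, Finset.mem_univ _, ?_⟩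
  rw [degree_eq] at hdeg
  ext j
  fin_cases j
  · simp only [Fin.zero_eta, Fin.isValue, mexp_apply0]
    omega
  · simp only [Fin.mk_one, Fin.isValue, mexp_apply1]

lemma fischer4_qform (b c : Fin 5 → ℝ) :
    fischer4 (qform b) (qform c) =
      b 0 * c 0 + 4 * (b 1 * c 1) + 6 * (b 2 * c 2) + 4 * (b 3 * c 3) + b 4 * c 4 := by
  have hsub : (qform b).support ∪ (qform c).support ⊆ Sset :=
    Finset.union_subset (supp_sub b) (supp_sub c)
  rw [fischer4]
  rw [Finset.sum_subset hsub]
  · rw [Sset, Finset.sum_image]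
    · rw [Fin.sum_univ_five]
      have h0 : ∀ (j k : ℕ), (∏ l, Nat.factorial (mexp j k l)) = Nat.factorial j * Nat.factorial k := by
        intro j k
        rw [Fin.prod_univ_two, mexp_apply0, mexp_apply1]
      simp only [coeff_qform, h0]
      norm_num [Nat.factorial, Nat.choose]
      ring
    · intro i _ j _ h
      have := congrArg (fun f => f 1) h
      simp only [mexp_apply1] at this
      exact Fin.ext this
  · intro d _ hd
    rw [Finset.notMem_union] at hd
    rw [notMem_support_iff.mp hd.1]
    ring

lemma mexp_inj {j k j' k' : ℕ} : mexp j k = mexp j' k' ↔ j = j' ∧ k = k' := by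
  constructor
  · intro h
    constructor
    · have := congrArg (fun f => f 0) h; simpa [mexp_apply0] using this
    · have := congrArg (fun f => f 1) h; simpa [mexp_apply1] using this
  · rintro ⟨rfl, rfl⟩; rfl

lemma homog2_rep (h : MvPolynomial (Fin 2) ℝ) (hh : h.IsHomogeneous 2) :
    h = monomial (mexp 2 0) (coeff (mexp 2 0) h) + monomial (mexp 1 1) (coeff (mexp 1 1) h) +
        monomial (mexp 0 2) (coeff (mexp 0 2) h) := by
  ext d
  simp only [coeff_add, coeff_monomial]
  by_cases hd : Finsupp.degree d = 2
  · rw [degree_eq] at hd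
    have hrep := eq_mexp d
    have hd1 : d 1 ≤ 2 := by omega
    interval_cases h1 : d 1
    · have : d = mexp 2 0 := by rw [hrep]; rw [mexp_inj]; omega
      subst this
      simp [mexp_inj, mexp_apply0, mexp_apply1]
    · have : d = mexp 1 1 := by rw [hrep]; rw [mexp_inj]; omega
      subst this
      simp [mexp_inj, mexp_apply0, mexp_apply1]
    · have : d = mexp 0 2 := by rw [hrep]; rw [mexp_inj]; omega
      subst this
      simp [mexp_inj, mexp_apply0, mexp_apply1]
  · rw [hh.coeff_eq_zero hd]
    rw [if_neg, if_neg, if_neg]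
    · simp
    all_goals
      intro hc
      apply hd
      rw [← hc, mexp_degree]

lemma support_three (h : MvPolynomial (Fin 2) ℝ) (hh : h.IsHomogeneous 2)
    (hcard : h.support.card ≤ 2) :
    coeff (mexp 2 0) h = 0 ∨ coeff (mexp 1 1) h = 0 ∨ coeff (mexp 0 2) h = 0 := by
  by_contra hc
  push_neg at hc
  obtain ⟨h1, h2, h3⟩ := hc
  have hsub : ({mexp 2 0, mexp 1 1, mexp 0 2} : Finset (Fin 2 →₀ ℕ)) ⊆ h.support := by
    intro d hd
    simp only [Finset.mem_insert, Finset.mem_singleton] at hd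
    rcases hd with rfl | rfl | rfl <;> exact mem_support_iff.mpr (by assumption)
  have hcard3 : ({mexp 2 0, mexp 1 1, mexp 0 2} : Finset (Fin 2 →₀ ℕ)).card = 3 := by
    rw [Finset.card_insert_of_notMem, Finset.card_insert_of_notMem, Finset.card_singleton]
    · simp [mexp_inj]
    · simp [mexp_inj]
  have := Finset.card_le_card hsub
  omega

lemma sq_as_qform (a b c : ℝ) :
    (monomial (mexp 2 0) a + monomial (mexp 1 1) b + monomial (mexp 0 2) c : MvPolynomial (Fin 2) ℝ) ^ 2 =
      qform ![a^2, a*b/2, (b^2 + 2*a*c)/6, b*c/2, c^2] := by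
  have e1 : (monomial (mexp 2 0) a : MvPolynomial (Fin 2) ℝ) = C a * X 0 ^ 2 * X 1 ^ 0 :=
    (CXX_eq_monomial a 2 0).symm
  have e2 : (monomial (mexp 1 1) b : MvPolynomial (Fin 2) ℝ) = C b * X 0 ^ 1 * X 1 ^ 1 :=
    (CXX_eq_monomial b 1 1).symm
  have e3 : (monomial (mexp 0 2) c : MvPolynomial (Fin 2) ℝ) = C c * X 0 ^ 0 * X 1 ^ 2 :=
    (CXX_eq_monomial c 0 2).symm
  rw [e1, e2, e3]
  apply MvPolynomial.funext
  intro x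
  simp [qform, Fin.sum_univ_five]
  norm_num [Nat.choose, show ((3:Fin 5):ℕ) = 3 from rfl, show ((4:Fin 5):ℕ) = 4 from rfl]
  ring

lemma quad_nonneg {x y z : ℝ} (hx : 0 ≤ x) (hz : 0 ≤ z) (hxz : y^2 ≤ x*z) (a b : ℝ) :
    0 ≤ a^2*x + 2*a*b*y + b^2*z := by
  rcases eq_or_lt_of_le hx with h|h
  · have hy : y = 0 := by nlinarith
    subst hy
    nlinarith [sq_nonneg b]
  · nlinarith [sq_nonneg (a*x + b*y), mul_nonneg (sq_nonneg b) (sub_nonneg.mpr hxz)]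

lemma mid_nonneg {x y z : ℝ} (hy : 0 ≤ y) (hx : 0 ≤ x) (hz : 0 ≤ z) (hxz : y^2 ≤ x*z) (a c : ℝ) :
    0 ≤ a^2*x + 2*a*c*y + c^2*z := by
  rcases le_or_gt 0 (a*c) with h|h
  · nlinarith [mul_nonneg h hy, mul_nonneg (sq_nonneg a) hx, mul_nonneg (sq_nonneg c) hz]
  · have hP : 0 ≤ a^2*x + c^2*z :=
      add_nonneg (mul_nonneg (sq_nonneg a) hx) (mul_nonneg (sq_nonneg c) hz)
    have hG : 0 ≤ 2*(-(a*c))*y := mul_nonneg (by nlinarith) hy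
    have hsq : (2*(-(a*c))*y)^2 ≤ (a^2*x + c^2*z)^2 := by
      nlinarith [sq_nonneg (a^2*x - c^2*z),
        mul_nonneg (mul_nonneg (sq_nonneg a) (sq_nonneg c)) (sub_nonneg.mpr hxz)]
    have hle : 2*(-(a*c))*y ≤ a^2*x + c^2*z := by nlinarith [hP, hG, hsq]
    nlinarith [hle]

lemma family_psd {x y z : ℝ} (H : ∀ a b : ℝ, 0 ≤ a^2*x + 2*a*b*y + b^2*z) :
    0 ≤ x ∧ 0 ≤ z ∧ y^2 ≤ x*z := by
  have hx : 0 ≤ x := by have := H 1 0; linarith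
  have hz : 0 ≤ z := by have := H 0 1; linarith
  refine ⟨hx, hz, ?_⟩
  rcases eq_or_lt_of_le hz with h|h
  · have hy : y = 0 := by
      by_contra hy
      have h2 := H 1 (-(x+1)/(2*y))
      have key : (1:ℝ)^2*x + 2*1*(-(x+1)/(2*y))*y + (-(x+1)/(2*y))^2*z = -1 := by
        rw [← h]
        field_simp
        ring
      rw [key] at h2
      linarith
    rw [hy, ← h]
    nlinarith
  · have h2 := H 1 (-(y/z))
    have hzne : z ≠ 0 := ne_of_gt h
    have key : (1:ℝ)^2*x + 2*1*(-(y/z))*y + (-(y/z))^2*z = x - y^2/z := by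
      field_simp
      ring
    rw [key] at h2
    have h3 := (div_le_iff₀ h).mp (by linarith : y^2/z ≤ x)
    linarith

def Kset (v : Fin 5 → ℝ) : Prop :=
  0 ≤ v 0 ∧ 0 ≤ v 2 ∧ 0 ≤ v 4 ∧ (v 1)^2 ≤ v 0 * v 2 ∧ (v 3)^2 ≤ v 2 * v 4 ∧ (v 2)^2 ≤ v 0 * v 4

lemma fischer_sq (v : Fin 5 → ℝ) (a b c : ℝ) :
    fischer4 (qform v)
      ((monomial (mexp 2 0) a + monomial (mexp 1 1) b + monomial (mexp 0 2) c : MvPolynomial (Fin 2) ℝ) ^ 2)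
    = a^2 * v 0 + 2*a*b * v 1 + (b^2 + 2*a*c) * v 2 + 2*b*c * v 3 + c^2 * v 4 := by
  rw [sq_as_qform, fischer4_qform]
  simp [Matrix.cons_val_zero, Matrix.cons_val_one]
  ring

lemma three_monomial_homog (a b c : ℝ) :
    (monomial (mexp 2 0) a + monomial (mexp 1 1) b + monomial (mexp 0 2) c :
      MvPolynomial (Fin 2) ℝ).IsHomogeneous 2 := by
  apply MvPolynomial.IsHomogeneous.add
  apply MvPolynomial.IsHomogeneous.add
  all_goals exact isHomogeneous_monomial _ (by rw [mexp_degree])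

lemma two_monomial_card (a b : ℝ) (d1 d2 : Fin 2 →₀ ℕ) :
    ((monomial d1 a + monomial d2 b : MvPolynomial (Fin 2) ℝ)).support.card ≤ 2 := by
  calc ((monomial d1 a + monomial d2 b : MvPolynomial (Fin 2) ℝ)).support.card
      ≤ ((monomial d1 a : MvPolynomial (Fin 2) ℝ).support ∪
         (monomial d2 b : MvPolynomial (Fin 2) ℝ).support).card :=
        Finset.card_le_card (support_add)
    _ ≤ (monomial d1 a : MvPolynomial (Fin 2) ℝ).support.card +
        (monomial d2 b : MvPolynomial (Fin 2) ℝ).support.card := Finset.card_union_le _ _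
    _ ≤ 1 + 1 := by
        gcongr <;> exact (Finset.card_le_card (support_monomial_subset)).trans (by simp)
    _ = 2 := rfl

lemma mem_dual_iff (v : Fin 5 → ℝ) : qform v ∈ DualSigma24_2 ↔ Kset v := by
  constructor
  · rintro ⟨-, H⟩
    have fam1 : ∀ a b : ℝ, 0 ≤ a^2 * v 0 + 2*a*b * v 1 + b^2 * v 2 := by
      intro a b
      have h2 := H (monomial (mexp 2 0) a + monomial (mexp 1 1) b + monomial (mexp 0 2) 0)
        (three_monomial_homog a b 0) (by rw [monomial_zero, add_zero]; exact two_monomial_card _ _ _ _)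
      rw [fischer_sq] at h2
      nlinarith [h2]
    have fam2 : ∀ b c : ℝ, 0 ≤ b^2 * v 2 + 2*b*c * v 3 + c^2 * v 4 := by
      intro b c
      have h2 := H (monomial (mexp 2 0) 0 + monomial (mexp 1 1) b + monomial (mexp 0 2) c)
        (three_monomial_homog 0 b c) (by rw [monomial_zero, zero_add]; exact two_monomial_card _ _ _ _)
      rw [fischer_sq] at h2
      nlinarith [h2]
    have fam3 : ∀ a c : ℝ, 0 ≤ a^2 * v 0 + 2*a*c * v 2 + c^2 * v 4 := by
      intro a c
      have h2 := H (monomial (mexp 2 0) a + monomial (mexp 1 1) 0 + monomial (mexp 0 2) c)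
        (three_monomial_homog a 0 c) (by rw [monomial_zero, add_zero]; exact two_monomial_card _ _ _ _)
      rw [fischer_sq] at h2
      nlinarith [h2]
    obtain ⟨h1, h2, h3⟩ := family_psd fam1
    obtain ⟨h4, h5, h6⟩ := family_psd fam2
    obtain ⟨-, -, h9⟩ := family_psd fam3
    exact ⟨h1, h2, h5, h3, h6, h9⟩
  · rintro ⟨k0, k2, k4, k1, k3, kmid⟩
    refine ⟨qform_homog v, ?_⟩
    intro h hh hcard
    have hst := support_three h hh hcard
    conv_rhs => rw [homog2_rep h hh]
    rw [fischer_sq]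
    rcases hst with h0 | h0 | h0 <;> rw [h0]
    · have := quad_nonneg k2 k4 k3 (coeff (mexp 1 1) h) (coeff (mexp 0 2) h)
      nlinarith [this]
    · have := mid_nonneg k2 k0 k4 kmid (coeff (mexp 2 0) h) (coeff (mexp 0 2) h)
      nlinarith [this]
    · have := quad_nonneg k0 k2 k1 (coeff (mexp 2 0) h) (coeff (mexp 1 1) h)
      nlinarith [this]

lemma blockEq {x0 x1 x2 a0 a1 a2 : ℝ} (ha0 : 0 ≤ a0) (ha2 : 0 ≤ a2)
    (hb0 : 0 ≤ x0 - a0) (hb2 : 0 ≤ x2 - a2)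
    (hA : a1^2 ≤ a0*a2) (hB : (x1-a1)^2 ≤ (x0-a0)*(x2-a2)) (hx : x1^2 = x0*x2) :
    a0*x2 = a2*x0 ∧ a1*x2 = x1*a2 := by
  set b0 := x0 - a0 with hb0d
  set b1 := x1 - a1 with hb1d
  set b2 := x2 - a2 with hb2d
  have h4 : a1^2*b1^2 ≤ (a0*a2)*(b0*b2) :=
    mul_le_mul hA hB (sq_nonneg b1) (mul_nonneg ha0 ha2)
  have hC : 0 ≤ a0*b2 + a2*b0 - 2*a1*b1 := by
    nlinarith [h4, sq_nonneg (a0*b2 - a2*b0), mul_nonneg ha0 hb2, mul_nonneg ha2 hb0]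
  have hzero : (a0*a2 - a1^2) + (b0*b2 - b1^2) + (a0*b2 + a2*b0 - 2*a1*b1) = 0 := by
    rw [hb0d, hb1d, hb2d]
    linear_combination -hx
  have hA0 : a0*a2 - a1^2 = 0 := by nlinarith [hB]
  have hB0 : b0*b2 - b1^2 = 0 := by nlinarith [hA]
  have hC0 : a0*b2 + a2*b0 - 2*a1*b1 = 0 := by linarith
  have hE : (a0*b2 - a2*b0)^2 = 0 := by
    linear_combination (a0*b2 + a2*b0 + 2*a1*b1)*hC0 - 4*b1^2*hA0 - 4*a0*a2*hB0
  have hE0 : a0*b2 - a2*b0 = 0 := by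
    have := sq_eq_zero_iff.mp hE
    linarith [this]
  have hF : (a1*b2 - b1*a2)^2 = 0 := by
    linear_combination (-(b2^2))*hA0 + (-(a2^2))*hB0 + (a2*b2)*hC0
  have hF0 : a1*b2 - b1*a2 = 0 := by
    have := sq_eq_zero_iff.mp hF
    linarith [this]
  constructor
  · have : x2 = a2 + b2 := by rw [hb2d]; ring
    rw [this]
    have : x0 = a0 + b0 := by rw [hb0d]; ring
    rw [this]
    linarith [hE0]
  · have h2 : x2 = a2 + b2 := by rw [hb2d]; ring
    have h1 : x1 = a1 + b1 := by rw [hb1d]; ring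
    rw [h2, h1]
    linarith [hF0]


lemma sqle_zero {a : ℝ} (h : a^2 ≤ 0) : a = 0 :=
  (pow_eq_zero_iff two_ne_zero).mp (le_antisymm h (sq_nonneg a))

lemma mkKset {a0 a1 a2 a3 a4 : ℝ} (h0 : 0 ≤ a0) (h2 : 0 ≤ a2) (h4 : 0 ≤ a4)
    (h1 : a1^2 ≤ a0*a2) (h3 : a3^2 ≤ a2*a4) (hm : a2^2 ≤ a0*a4) :
    Kset ![a0,a1,a2,a3,a4] := by
  refine ⟨by simpa using h0, by simpa using h2, by simpa using h4,
    by simpa using h1, by simpa using h3, by simpa using hm⟩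

lemma tight {A B C : ℝ} (hA : 0 ≤ A) (hB : 0 ≤ B) (hlt : C^2 < A*B) :
    ∃ δ : ℝ, 0 < δ ∧ (C/2 + δ)^2 ≤ (A/2)*(B/2) ∧ (C/2 - δ)^2 ≤ (A/2)*(B/2) := by
  set δ := (Real.sqrt (A*B) - |C|)/2 with hδ
  have habs : |C| < Real.sqrt (A*B) := by
    rw [← Real.sqrt_sq_eq_abs]
    exact Real.sqrt_lt_sqrt (sq_nonneg _) hlt
  have hδpos : 0 < δ := by rw [hδ]; linarith
  have hsq : Real.sqrt (A*B)^2 = A*B := Real.sq_sqrt (by nlinarith [sq_nonneg C])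
  refine ⟨δ, hδpos, ?_, ?_⟩
  · have h5 : |C/2 + δ| ≤ Real.sqrt (A*B)/2 := by
      calc |C/2 + δ| ≤ |C/2| + |δ| := abs_add_le _ _
        _ = |C|/2 + δ := by rw [abs_of_pos hδpos, abs_div]; norm_num
        _ ≤ Real.sqrt (A*B)/2 := by rw [hδ]; linarith
    nlinarith [sq_abs (C/2 + δ), mul_self_le_mul_self (abs_nonneg (C/2 + δ)) h5, hsq]
  · have h5 : |C/2 - δ| ≤ Real.sqrt (A*B)/2 := by
      calc |C/2 - δ| ≤ |C/2| + |δ| := abs_sub _ _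
        _ = |C|/2 + δ := by rw [abs_of_pos hδpos, abs_div]; norm_num
        _ ≤ Real.sqrt (A*B)/2 := by rw [hδ]; linarith
    nlinarith [sq_abs (C/2 - δ), mul_self_le_mul_self (abs_nonneg (C/2 - δ)) h5, hsq]


lemma key (v : Fin 5 → ℝ) (hv : Kset v) :
    (v ≠ 0 ∧ ∀ c₁ c₂ : Fin 5 → ℝ, Kset c₁ → Kset c₂ → v = c₁ + c₂ →
        (∃ k : ℝ, 0 ≤ k ∧ c₁ = k • v) ∧ (∃ k : ℝ, 0 ≤ k ∧ c₂ = k • v)) ↔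
    (∃ c : ℝ, 0 < c ∧
      (v = c • ![1,0,0,0,0] ∨ v = c • ![0,0,0,0,1] ∨
       ∃ r s t ε₁ ε₂ : ℝ, 0 < r ∧ 0 < s ∧ 0 < t ∧ t^2 ≤ r*s ∧
         (ε₁ = 1 ∨ ε₁ = -1) ∧ (ε₂ = 1 ∨ ε₂ = -1) ∧
         v = c • ![r^2, ε₁*r*t, t^2, ε₂*s*t, s^2])) := by
  obtain ⟨k0, k2, k4, k1, k3, kmid⟩ := hv
  constructor
  · rintro ⟨hne, hdec⟩
    by_cases h2 : v 2 = 0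
    · -- boundary case
      have h1 : v 1 = 0 := sqle_zero (by rw [h2, mul_zero] at k1; exact k1)
      have h3 : v 3 = 0 := sqle_zero (by rw [h2, zero_mul] at k3; exact k3)
      have K1 : Kset ![v 0, 0, 0, 0, 0] := mkKset k0 le_rfl le_rfl (by nlinarith) (by nlinarith) (by nlinarith)
      have K2 : Kset ![0, 0, 0, 0, v 4] := mkKset le_rfl le_rfl k4 (by nlinarith) (by nlinarith) (by nlinarith)
      have heq : v = ![v 0, 0, 0, 0, 0] + ![0, 0, 0, 0, v 4] := by
        funext i
        fin_cases i <;> simp [h1, h2, h3]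
      obtain ⟨⟨ka, hka, hc1⟩, -⟩ := hdec _ _ K1 K2 heq
      by_cases h0 : v 0 = 0
      · have h4 : v 4 ≠ 0 := by
          intro h4
          apply hne
          funext i
          fin_cases i <;> simp [h0, h1, h2, h3, h4]
        refine ⟨v 4, lt_of_le_of_ne k4 (Ne.symm h4), Or.inr (Or.inl ?_)⟩
        funext i
        fin_cases i <;> simp [h0, h1, h2, h3]
      · by_cases h4 : v 4 = 0
        · refine ⟨v 0, lt_of_le_of_ne k0 (Ne.symm h0), Or.inl ?_⟩
          funext i
          fin_cases i <;> simp [h4, h1, h2, h3]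
        · exfalso
          have e4 := congrFun hc1 4
          have e0 := congrFun hc1 0
          simp [Pi.smul_apply, smul_eq_mul] at e4 e0
          have hka0 : ka = 0 := by
            rcases e4 with h | h
            · exact h
            · exact absurd h h4
          rw [hka0] at e0
          simp at e0
          exact h0 e0
    · -- interior case
      have h2p : 0 < v 2 := lt_of_le_of_ne k2 (Ne.symm h2)
      have h0p : 0 < v 0 := by
        rcases lt_or_eq_of_le k0 with h | h
        · exact h
        · exfalso; nlinarith [kmid]
      have h4p : 0 < v 4 := by
        rcases lt_or_eq_of_le k4 with h | h
        · exact h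
        · exfalso; nlinarith [kmid]
      have ht1 : (v 1)^2 = v 0 * v 2 := by
        by_contra hne1
        obtain ⟨δ, hδpos, hb1, hb2⟩ := tight k0 k2 (lt_of_le_of_ne k1 hne1)
        have K1 : Kset ![v 0/2, v 1/2 + δ, v 2/2, v 3/2, v 4/2] :=
          mkKset (by linarith) (by linarith) (by linarith) hb1 (by nlinarith) (by nlinarith)
        have K2 : Kset ![v 0/2, v 1/2 - δ, v 2/2, v 3/2, v 4/2] :=
          mkKset (by linarith) (by linarith) (by linarith) hb2 (by nlinarith) (by nlinarith)
        have heq : v = ![v 0/2, v 1/2 + δ, v 2/2, v 3/2, v 4/2] +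
            ![v 0/2, v 1/2 - δ, v 2/2, v 3/2, v 4/2] := by
          funext i
          fin_cases i <;> simp <;> ring
        obtain ⟨⟨ka, hka, hc1⟩, -⟩ := hdec _ _ K1 K2 heq
        have e0 := congrFun hc1 0
        have e1 := congrFun hc1 1
        simp [Pi.smul_apply, smul_eq_mul] at e0 e1
        have hka2 : ka = 1/2 := by
          have : (ka - 1/2) * v 0 = 0 := by linarith [e0]
          rcases mul_eq_zero.mp this with h | h
          · linarith
          · exact absurd h (ne_of_gt h0p)
        rw [hka2] at e1
        linarith [e1]
      have ht3 : (v 3)^2 = v 2 * v 4 := by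
        by_contra hne3
        obtain ⟨δ, hδpos, hb1, hb2⟩ := tight k2 k4 (lt_of_le_of_ne k3 hne3)
        have K1 : Kset ![v 0/2, v 1/2, v 2/2, v 3/2 + δ, v 4/2] :=
          mkKset (by linarith) (by linarith) (by linarith) (by nlinarith) hb1 (by nlinarith)
        have K2 : Kset ![v 0/2, v 1/2, v 2/2, v 3/2 - δ, v 4/2] :=
          mkKset (by linarith) (by linarith) (by linarith) (by nlinarith) hb2 (by nlinarith)
        have heq : v = ![v 0/2, v 1/2, v 2/2, v 3/2 + δ, v 4/2] +
            ![v 0/2, v 1/2, v 2/2, v 3/2 - δ, v 4/2] := by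
          funext i
          fin_cases i <;> simp <;> ring
        obtain ⟨⟨ka, hka, hc1⟩, -⟩ := hdec _ _ K1 K2 heq
        have e0 := congrFun hc1 0
        have e3 := congrFun hc1 3
        simp [Pi.smul_apply, smul_eq_mul] at e0 e3
        have hka2 : ka = 1/2 := by
          have : (ka - 1/2) * v 0 = 0 := by linarith [e0]
          rcases mul_eq_zero.mp this with h | h
          · linarith
          · exact absurd h (ne_of_gt h0p)
        rw [hka2] at e3
        linarith [e3]
      set r := Real.sqrt (v 0) with hr
      set s := Real.sqrt (v 4) with hs
      set t := Real.sqrt (v 2) with ht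
      have hrp : 0 < r := Real.sqrt_pos.mpr h0p
      have hsp : 0 < s := Real.sqrt_pos.mpr h4p
      have htp : 0 < t := Real.sqrt_pos.mpr h2p
      have hr2 : r^2 = v 0 := Real.sq_sqrt k0
      have hs2 : s^2 = v 4 := Real.sq_sqrt k4
      have ht2 : t^2 = v 2 := Real.sq_sqrt k2
      have hts : t^2 ≤ r * s := by
        rw [ht2]
        have h5 : v 2 = Real.sqrt ((v 2)^2) := (Real.sqrt_sq k2).symm
        rw [h5, hr, hs, ← Real.sqrt_mul k0]
        exact Real.sqrt_le_sqrt kmid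
      have hrtne : r * t ≠ 0 := by positivity
      have hstne : s * t ≠ 0 := by positivity
      have hrt : v 1 = r*t ∨ v 1 = -(r*t) := by
        have hsq : (v 1)^2 = (r*t)^2 := by rw [mul_pow, hr2, ht2, ht1]
        rcases sq_eq_sq_iff_eq_or_eq_neg.mp hsq with h | h
        · left; exact h
        · right; exact h
      have hst : v 3 = s*t ∨ v 3 = -(s*t) := by
        have hsq : (v 3)^2 = (s*t)^2 := by rw [mul_pow, hs2, ht2, ht3]; ring
        rcases sq_eq_sq_iff_eq_or_eq_neg.mp hsq with h | h
        · left; exact h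
        · right; exact h
      refine ⟨1, one_pos, Or.inr (Or.inr ⟨r, s, t, v 1/(r*t), v 3/(s*t), hrp, hsp, htp, hts,
        ?_, ?_, ?_⟩)⟩
      · rcases hrt with h | h
        · left; rw [h]; field_simp
        · right; rw [h]; field_simp
      · rcases hst with h | h
        · left; rw [h]; field_simp
        · right; rw [h]; field_simp
      · funext i
        fin_cases i <;> simp [hr2, hs2, ht2] <;> field_simp <;> ring
  · rintro ⟨c, hc, hcase⟩
    rcases hcase with hv0 | hv4 | ⟨r, s, t, ε₁, ε₂, hrp, hsp, htp, hts, hε₁, hε₂, hveq⟩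
    · have hv : ∀ i, v i = c * (![1,0,0,0,0] : Fin 5 → ℝ) i := fun i => by
        rw [hv0]; simp
      have e0 : v 0 = c := by rw [hv 0]; simp
      have e1 : v 1 = 0 := by rw [hv 1]; simp
      have e2 : v 2 = 0 := by rw [hv 2]; simp
      have e3 : v 3 = 0 := by rw [hv 3]; simp
      have e4 : v 4 = 0 := by rw [hv 4]; simp
      constructor
      · intro h
        have := congrFun h 0
        simp [e0] at this
        linarith
      · intro c₁ c₂ K1 K2 heq
        obtain ⟨p0, p2, p4, p1, p3, pm⟩ := K1
        obtain ⟨q0, q2, q4, q1, q3, qm⟩ := K2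
        have s0 := congrFun heq 0
        have s1 := congrFun heq 1
        have s2 := congrFun heq 2
        have s3 := congrFun heq 3
        have s4 := congrFun heq 4
        simp [Pi.add_apply] at s0 s1 s2 s3 s4
        have c12 : c₁ 2 = 0 := by rw [e2] at s2; linarith
        have c22 : c₂ 2 = 0 := by rw [e2] at s2; linarith
        have c14 : c₁ 4 = 0 := by rw [e4] at s4; linarith
        have c24 : c₂ 4 = 0 := by rw [e4] at s4; linarith
        have c11 : c₁ 1 = 0 := sqle_zero (by rw [c12, mul_zero] at p1; exact p1)
        have c21 : c₂ 1 = 0 := sqle_zero (by rw [c22, mul_zero] at q1; exact q1)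
        have c13 : c₁ 3 = 0 := sqle_zero (by rw [c12, zero_mul] at p3; exact p3)
        have c23 : c₂ 3 = 0 := sqle_zero (by rw [c22, zero_mul] at q3; exact q3)
        constructor
        · refine ⟨c₁ 0 / c, div_nonneg p0 hc.le, ?_⟩
          funext i
          fin_cases i <;> simp [Pi.smul_apply, smul_eq_mul, c11, c12, c13, c14, e1, e2, e3, e4]
          rw [e0]; field_simp
        · refine ⟨c₂ 0 / c, div_nonneg q0 hc.le, ?_⟩
          funext i
          fin_cases i <;> simp [Pi.smul_apply, smul_eq_mul, c21, c22, c23, c24, e1, e2, e3, e4]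
          rw [e0]; field_simp
    · have hv : ∀ i, v i = c * (![0,0,0,0,1] : Fin 5 → ℝ) i := fun i => by
        rw [hv4]; simp
      have e0 : v 0 = 0 := by rw [hv 0]; simp
      have e1 : v 1 = 0 := by rw [hv 1]; simp
      have e2 : v 2 = 0 := by rw [hv 2]; simp
      have e3 : v 3 = 0 := by rw [hv 3]; simp
      have e4 : v 4 = c := by rw [hv 4]; simp
      constructor
      · intro h
        have := congrFun h 4
        simp [e4] at this
        linarith
      · intro c₁ c₂ K1 K2 heq
        obtain ⟨p0, p2, p4, p1, p3, pm⟩ := K1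
        obtain ⟨q0, q2, q4, q1, q3, qm⟩ := K2
        have s0 := congrFun heq 0
        have s1 := congrFun heq 1
        have s2 := congrFun heq 2
        have s3 := congrFun heq 3
        have s4 := congrFun heq 4
        simp [Pi.add_apply] at s0 s1 s2 s3 s4
        have c12 : c₁ 2 = 0 := by rw [e2] at s2; linarith
        have c22 : c₂ 2 = 0 := by rw [e2] at s2; linarith
        have c10 : c₁ 0 = 0 := by rw [e0] at s0; linarith
        have c20 : c₂ 0 = 0 := by rw [e0] at s0; linarith
        have c11 : c₁ 1 = 0 := sqle_zero (by rw [c12, mul_zero] at p1; exact p1)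
        have c21 : c₂ 1 = 0 := sqle_zero (by rw [c22, mul_zero] at q1; exact q1)
        have c13 : c₁ 3 = 0 := sqle_zero (by rw [c12, zero_mul] at p3; exact p3)
        have c23 : c₂ 3 = 0 := sqle_zero (by rw [c22, zero_mul] at q3; exact q3)
        constructor
        · refine ⟨c₁ 4 / c, div_nonneg p4 hc.le, ?_⟩
          funext i
          fin_cases i <;> simp [Pi.smul_apply, smul_eq_mul, c11, c12, c13, c10, e0, e1, e2, e3]
          rw [e4]; field_simp
        · refine ⟨c₂ 4 / c, div_nonneg q4 hc.le, ?_⟩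
          funext i
          fin_cases i <;> simp [Pi.smul_apply, smul_eq_mul, c21, c22, c23, c20, e0, e1, e2, e3]
          rw [e4]; field_simp
    · have hε₁sq : ε₁^2 = 1 := by rcases hε₁ with h | h <;> rw [h] <;> norm_num
      have hε₂sq : ε₂^2 = 1 := by rcases hε₂ with h | h <;> rw [h] <;> norm_num
      have hv : ∀ i, v i = c * (![r^2, ε₁*r*t, t^2, ε₂*s*t, s^2] : Fin 5 → ℝ) i := fun i => by
        rw [hveq]; simp
      have e0 : v 0 = c * r^2 := by rw [hv 0]; simp
      have e1 : v 1 = c * (ε₁*r*t) := by rw [hv 1]; simp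
      have e2 : v 2 = c * t^2 := by rw [hv 2]; simp
      have e3 : v 3 = c * (ε₂*s*t) := by rw [hv 3]; simp
      have e4 : v 4 = c * s^2 := by rw [hv 4]; simp
      have h2p : 0 < v 2 := by rw [e2]; positivity
      have h0p : 0 < v 0 := by rw [e0]; positivity
      have h4p : 0 < v 4 := by rw [e4]; positivity
      have hx1 : (v 1)^2 = v 0 * v 2 := by rw [e0, e1, e2]; linear_combination c^2*r^2*t^2*hε₁sq
      have hx3 : (v 3)^2 = v 2 * v 4 := by rw [e3, e2, e4]; linear_combination c^2*s^2*t^2*hε₂sq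
      constructor
      · intro h
        have := congrFun h 2
        simp at this
        rw [this] at h2p
        exact lt_irrefl 0 h2p
      · intro c₁ c₂ K1 K2 heq
        obtain ⟨p0, p2, p4, p1, p3, pm⟩ := K1
        obtain ⟨q0, q2, q4, q1, q3, qm⟩ := K2
        have s0 := congrFun heq 0
        have s1 := congrFun heq 1
        have s2 := congrFun heq 2
        have s3 := congrFun heq 3
        have s4 := congrFun heq 4
        simp [Pi.add_apply] at s0 s1 s2 s3 s4
        -- block (0,1,2) for c₁
        have B1 := blockEq (x0 := v 0) (x1 := v 1) (x2 := v 2)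
          (a0 := c₁ 0) (a1 := c₁ 1) (a2 := c₁ 2) p0 p2 (by linarith : 0 ≤ v 0 - c₁ 0) (by linarith : 0 ≤ v 2 - c₁ 2)
          p1 (by
            have h' : v 1 - c₁ 1 = c₂ 1 := by linarith
            have h0' : v 0 - c₁ 0 = c₂ 0 := by linarith
            have h2' : v 2 - c₁ 2 = c₂ 2 := by linarith
            rw [h', h0', h2']
            exact q1) hx1
        -- block (4,3,2) for c₁
        have B2 := blockEq (x0 := v 4) (x1 := v 3) (x2 := v 2)
          (a0 := c₁ 4) (a1 := c₁ 3) (a2 := c₁ 2) p4 p2 (by linarith : 0 ≤ v 4 - c₁ 4) (by linarith : 0 ≤ v 2 - c₁ 2)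
          (by rw [mul_comm]; exact p3 : (c₁ 3)^2 ≤ c₁ 4 * c₁ 2)
          (by
            have h' : v 3 - c₁ 3 = c₂ 3 := by linarith
            have h4' : v 4 - c₁ 4 = c₂ 4 := by linarith
            have h2' : v 2 - c₁ 2 = c₂ 2 := by linarith
            rw [h', h4', h2', mul_comm]
            exact q3)
          (by rw [mul_comm]; exact hx3)
        obtain ⟨pe0, pe1⟩ := B1
        obtain ⟨pe4, pe3⟩ := B2
        have hk1 : c₁ = (c₁ 2 / v 2) • v := by
          funext i
          fin_cases i
          · show c₁ 0 = (c₁ 2 / v 2) * v 0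
            field_simp
            linear_combination pe0
          · show c₁ 1 = (c₁ 2 / v 2) * v 1
            field_simp
            linear_combination pe1
          · show c₁ 2 = (c₁ 2 / v 2) * v 2
            field_simp
          · show c₁ 3 = (c₁ 2 / v 2) * v 3
            field_simp
            linear_combination pe3
          · show c₁ 4 = (c₁ 2 / v 2) * v 4
            field_simp
            linear_combination pe4
        have hq2 : c₂ 2 = v 2 - c₁ 2 := by linarith
        have hk2 : c₂ = (c₂ 2 / v 2) • v := by
          funext i
          have hi := congrFun heq i
          have hk1i := congrFun hk1 i
          simp only [Pi.smul_apply, smul_eq_mul, Pi.add_apply] at hi hk1i ⊢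
          have hsub : c₂ i = v i - c₁ i := by linarith [hi]
          rw [hsub, hk1i, hq2]
          field_simp
        exact ⟨⟨c₁ 2 / v 2, div_nonneg p2 h2p.le, hk1⟩,
          ⟨c₂ 2 / v 2, div_nonneg q2 h2p.le, hk2⟩⟩

lemma qform_zero : qform (0 : Fin 5 → ℝ) = 0 := by
  simp [qform]

lemma qform_X0 : qform ![1,0,0,0,0] = (X 0 : MvPolynomial (Fin 2) ℝ) ^ 4 := by
  apply MvPolynomial.funext
  intro x
  simp [qform, Fin.sum_univ_five]

lemma qform_X1 : qform ![0,0,0,0,1] = (X 1 : MvPolynomial (Fin 2) ℝ) ^ 4 := by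
  apply MvPolynomial.funext
  intro x
  simp [qform, Fin.sum_univ_five, show ((4:Fin 5):ℕ) = 4 from rfl]

theorem extremal_elements_dual_sigma24_2 (p : MvPolynomial (Fin 2) ℝ)
    (hp : p ∈ DualSigma24_2) :
    (p ≠ 0 ∧ ∀ q₁ q₂ : MvPolynomial (Fin 2) ℝ,
        q₁ ∈ DualSigma24_2 → q₂ ∈ DualSigma24_2 → p = q₁ + q₂ →
        (∃ c₁ : ℝ, 0 ≤ c₁ ∧ q₁ = c₁ • p) ∧ (∃ c₂ : ℝ, 0 ≤ c₂ ∧ q₂ = c₂ • p)) ↔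
    (∃ c : ℝ, 0 < c ∧
      (p = c • (X 0 : MvPolynomial (Fin 2) ℝ) ^ 4 ∨
       p = c • (X 1 : MvPolynomial (Fin 2) ℝ) ^ 4 ∨
       ∃ r s t ε₁ ε₂ : ℝ, 0 < r ∧ 0 < s ∧ 0 < t ∧ t ≤ Real.sqrt (r * s) ∧
         (ε₁ = 1 ∨ ε₁ = -1) ∧ (ε₂ = 1 ∨ ε₂ = -1) ∧
         p = c • qform ![r ^ 2, ε₁ * r * t, t ^ 2, ε₂ * s * t, s ^ 2])) := by
  set b : Fin 5 → ℝ := fun i => coeff (mexp (4 - (i:ℕ)) (i:ℕ)) p / (Nat.choose 4 (i:ℕ) : ℝ)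
    with hbdef
  have hpb : p = qform b := homog4_rep p hp.1
  have hKb : Kset b := (mem_dual_iff b).mp (by rw [← hpb]; exact hp)
  have hkey := key b hKb
  constructor
  · rintro ⟨hpne, hdec⟩
    have hL : b ≠ 0 ∧ ∀ c₁ c₂ : Fin 5 → ℝ, Kset c₁ → Kset c₂ → b = c₁ + c₂ →
        (∃ k : ℝ, 0 ≤ k ∧ c₁ = k • b) ∧ (∃ k : ℝ, 0 ≤ k ∧ c₂ = k • b) := by
      refine ⟨?_, ?_⟩
      · intro h0
        apply hpne
        rw [hpb, h0, qform_zero]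
      · intro c₁ c₂ K1 K2 heq
        have hq1 : qform c₁ ∈ DualSigma24_2 := (mem_dual_iff c₁).mpr K1
        have hq2 : qform c₂ ∈ DualSigma24_2 := (mem_dual_iff c₂).mpr K2
        have hpeq : p = qform c₁ + qform c₂ := by rw [hpb, heq, qform_add]
        obtain ⟨⟨k1', hk1', e1⟩, ⟨k2', hk2', e2⟩⟩ := hdec _ _ hq1 hq2 hpeq
        constructor
        · refine ⟨k1', hk1', qform_inj ?_⟩
          rw [e1, hpb, ← qform_smul]
        · refine ⟨k2', hk2', qform_inj ?_⟩
          rw [e2, hpb, ← qform_smul]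
    obtain ⟨c, hc, hcase⟩ := hkey.mp hL
    refine ⟨c, hc, ?_⟩
    rcases hcase with h | h | ⟨r, s, t, ε₁, ε₂, hr, hs, ht, hts, he1, he2, heq⟩
    · left
      rw [hpb, h, qform_smul, qform_X0]
    · right; left
      rw [hpb, h, qform_smul, qform_X1]
    · right; right
      refine ⟨r, s, t, ε₁, ε₂, hr, hs, ht, ?_, he1, he2, ?_⟩
      · exact (Real.le_sqrt ht.le (by positivity)).mpr hts
      · rw [hpb, heq, qform_smul]
  · rintro ⟨c, hc, hcase⟩
    have hR : ∃ c : ℝ, 0 < c ∧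
        (b = c • ![1,0,0,0,0] ∨ b = c • ![0,0,0,0,1] ∨
         ∃ r s t ε₁ ε₂ : ℝ, 0 < r ∧ 0 < s ∧ 0 < t ∧ t^2 ≤ r*s ∧
           (ε₁ = 1 ∨ ε₁ = -1) ∧ (ε₂ = 1 ∨ ε₂ = -1) ∧
           b = c • ![r^2, ε₁*r*t, t^2, ε₂*s*t, s^2]) := by
      refine ⟨c, hc, ?_⟩
      rcases hcase with h | h | ⟨r, s, t, ε₁, ε₂, hr, hs, ht, hts, he1, he2, heq⟩
      · left
        apply qform_inj
        rw [← hpb, h, qform_smul, qform_X0]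
      · right; left
        apply qform_inj
        rw [← hpb, h, qform_smul, qform_X1]
      · right; right
        refine ⟨r, s, t, ε₁, ε₂, hr, hs, ht, ?_, he1, he2, ?_⟩
        · exact (Real.le_sqrt ht.le (by positivity)).mp hts
        · apply qform_inj
          rw [← hpb, heq, qform_smul]
    obtain ⟨hbne, hbdec⟩ := hkey.mpr hR
    refine ⟨?_, ?_⟩
    · intro h0
      apply hbne
      apply qform_inj
      rw [← hpb, h0, qform_zero]
    · intro q₁ q₂ hq₁ hq₂ heq
      set b₁ : Fin 5 → ℝ := fun i => coeff (mexp (4 - (i:ℕ)) (i:ℕ)) q₁ / (Nat.choose 4 (i:ℕ) : ℝ)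
      set b₂ : Fin 5 → ℝ := fun i => coeff (mexp (4 - (i:ℕ)) (i:ℕ)) q₂ / (Nat.choose 4 (i:ℕ) : ℝ)
      have hq1b : q₁ = qform b₁ := homog4_rep q₁ hq₁.1
      have hq2b : q₂ = qform b₂ := homog4_rep q₂ hq₂.1
      have hK1 : Kset b₁ := (mem_dual_iff b₁).mp (by rw [← hq1b]; exact hq₁)
      have hK2 : Kset b₂ := (mem_dual_iff b₂).mp (by rw [← hq2b]; exact hq₂)
      have hsum : b = b₁ + b₂ := by
        apply qform_inj
        rw [← hpb, heq, hq1b, hq2b, qform_add]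
      obtain ⟨⟨k1', hk1', e1⟩, ⟨k2', hk2', e2⟩⟩ := hbdec b₁ b₂ hK1 hK2 hsum
      constructor
      · refine ⟨k1', hk1', ?_⟩
        rw [hq1b, e1, qform_smul, ← hpb]
      · refine ⟨k2', hk2', ?_⟩
        rw [hq2b, e2, qform_smul, ← hpb]
end

section
/- Let p ∈ ℂ[x₁,…,xₙ] be an irreducible homogeneous polynomial of degree d. Then there exists s > 0 such that for every homogeneous polynomial q ∈ ℂ[x₁,…,xₙ] of degree d (or q = 0) all of whose coefficients have absolute value at most s, the polynomial p + q is irreducible in ℂ[x₁,…,xₙ]. -/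
open MvPolynomial


namespace Pert

variable {n : ℕ}

lemma degree_add (u v : Fin n →₀ ℕ) : (u + v).degree = u.degree + v.degree := by
  simp only [Finsupp.degree_eq_weight_one]
  exact map_add _ u v

lemma isHomogeneous_of_bounds {f : MvPolynomial (Fin n) ℂ} {e : ℕ}
    (h : ∀ σ : Fin n →₀ ℕ, coeff σ f ≠ 0 → σ.degree = e) : f.IsHomogeneous e := by
  intro σ hσ
  change Finsupp.weight (fun _ => 1) σ = e
  rw [← Finsupp.degree_eq_weight_one]
  exact h σ hσ

lemma degree_of_coeff_ne_zero {f : MvPolynomial (Fin n) ℂ} {e : ℕ} (hf : f.IsHomogeneous e)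
    {σ : Fin n →₀ ℕ} (h : coeff σ f ≠ 0) : σ.degree = e := by
  by_contra hne
  exact h (hf.coeff_eq_zero hne)

lemma coeff_mul_max (f g : MvPolynomial (Fin n) ℂ) (a b : ℕ)
    (hf : ∀ σ : Fin n →₀ ℕ, coeff σ f ≠ 0 → σ.degree ≤ a)
    (hg : ∀ σ : Fin n →₀ ℕ, coeff σ g ≠ 0 → σ.degree ≤ b)
    {τ : Fin n →₀ ℕ} (hτ : τ.degree = a + b) :
    coeff τ (f * g) = coeff τ (homogeneousComponent a f * homogeneousComponent b g) := by
  rw [coeff_mul, coeff_mul]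
  refine Finset.sum_congr rfl ?_
  rintro ⟨u, v⟩ huv
  rw [Finset.HasAntidiagonal.mem_antidiagonal] at huv
  have hdeg : u.degree + v.degree = a + b := by rw [← degree_add, huv, hτ]
  simp only [coeff_homogeneousComponent]
  by_cases hu : u.degree = a
  · have hv : v.degree = b := by omega
    rw [if_pos hu, if_pos hv]
  · rw [if_neg hu]
    rcases lt_or_gt_of_ne hu with hlt | hgt
    · -- u.degree < a, so v.degree > b, so coeff v g = 0
      have : ¬ v.degree ≤ b := by omega
      have : coeff v g = 0 := by
        by_contra hc; exact this (hg v hc)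
      simp [this]
    · have : ¬ u.degree ≤ a := by omega
      have : coeff u f = 0 := by
        by_contra hc; exact this (hf u hc)
      simp [this]

lemma coeff_mul_min (f g : MvPolynomial (Fin n) ℂ) (a b : ℕ)
    (hf : ∀ σ : Fin n →₀ ℕ, coeff σ f ≠ 0 → a ≤ σ.degree)
    (hg : ∀ σ : Fin n →₀ ℕ, coeff σ g ≠ 0 → b ≤ σ.degree)
    {τ : Fin n →₀ ℕ} (hτ : τ.degree = a + b) :
    coeff τ (f * g) = coeff τ (homogeneousComponent a f * homogeneousComponent b g) := by
  rw [coeff_mul, coeff_mul]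
  refine Finset.sum_congr rfl ?_
  rintro ⟨u, v⟩ huv
  rw [Finset.HasAntidiagonal.mem_antidiagonal] at huv
  have hdeg : u.degree + v.degree = a + b := by rw [← degree_add, huv, hτ]
  simp only [coeff_homogeneousComponent]
  by_cases hu : u.degree = a
  · have hv : v.degree = b := by omega
    rw [if_pos hu, if_pos hv]
  · rw [if_neg hu]
    rcases lt_or_gt_of_ne hu with hlt | hgt
    · have : ¬ a ≤ u.degree := by omega
      have : coeff u f = 0 := by
        by_contra hc; exact this (hf u hc)
      simp [this]
    · have : ¬ b ≤ v.degree := by omega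
      have : coeff v g = 0 := by
        by_contra hc; exact this (hg v hc)
      simp [this]


lemma exists_max_attain {f : MvPolynomial (Fin n) ℂ} (hf : f ≠ 0) :
    ∃ σ ∈ f.support, σ.degree = f.totalDegree := by
  obtain ⟨σ, hσ, h2⟩ := f.support.exists_mem_eq_sup (MvPolynomial.support_nonempty.mpr hf)
    (fun s => s.sum fun _ e => e)
  exact ⟨σ, hσ, h2.symm⟩

/-- key: factors of a nonzero homogeneous polynomial are homogeneous -/
lemma factor_homog {f g : MvPolynomial (Fin n) ℂ} {d : ℕ} (hf : f ≠ 0) (hg : g ≠ 0)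
    (h : (f * g).IsHomogeneous d) :
    f.IsHomogeneous f.totalDegree ∧ g.IsHomogeneous g.totalDegree ∧
      f.totalDegree + g.totalDegree = d := by
  classical
  set A := f.totalDegree with hA
  set B := g.totalDegree with hB
  have hfs : f.support.Nonempty := MvPolynomial.support_nonempty.mpr hf
  have hgs : g.support.Nonempty := MvPolynomial.support_nonempty.mpr hg
  set a := f.support.inf' hfs Finsupp.degree with ha
  set b := g.support.inf' hgs Finsupp.degree with hb
  -- bounds
  have hfub : ∀ σ : Fin n →₀ ℕ, coeff σ f ≠ 0 → σ.degree ≤ A := fun σ hσ =>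
    le_totalDegree (by rwa [mem_support_iff])
  have hgub : ∀ σ : Fin n →₀ ℕ, coeff σ g ≠ 0 → σ.degree ≤ B := fun σ hσ =>
    le_totalDegree (by rwa [mem_support_iff])
  have hflb : ∀ σ : Fin n →₀ ℕ, coeff σ f ≠ 0 → a ≤ σ.degree := fun σ hσ =>
    Finset.inf'_le _ (by rwa [mem_support_iff])
  have hglb : ∀ σ : Fin n →₀ ℕ, coeff σ g ≠ 0 → b ≤ σ.degree := fun σ hσ =>
    Finset.inf'_le _ (by rwa [mem_support_iff])
  -- top components nonzero
  have hFA : homogeneousComponent A f ≠ 0 := by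
    obtain ⟨σ, hσ, hdeg⟩ := exists_max_attain hf
    intro hz
    have := coeff_homogeneousComponent (σ := Fin n) A f σ
    rw [hz, if_pos hdeg] at this
    exact (mem_support_iff.mp hσ) this.symm
  have hGB : homogeneousComponent B g ≠ 0 := by
    obtain ⟨σ, hσ, hdeg⟩ := exists_max_attain hg
    intro hz
    have := coeff_homogeneousComponent (σ := Fin n) B g σ
    rw [hz, if_pos hdeg] at this
    exact (mem_support_iff.mp hσ) this.symm
  -- bottom components nonzero
  have hFa : homogeneousComponent a f ≠ 0 := by
    obtain ⟨σ, hσ, hdeg⟩ := f.support.exists_mem_eq_inf' hfs Finsupp.degree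
    intro hz
    have := coeff_homogeneousComponent (σ := Fin n) a f σ
    rw [hz, if_pos hdeg.symm] at this
    exact (mem_support_iff.mp hσ) this.symm
  have hGb : homogeneousComponent b g ≠ 0 := by
    obtain ⟨σ, hσ, hdeg⟩ := g.support.exists_mem_eq_inf' hgs Finsupp.degree
    intro hz
    have := coeff_homogeneousComponent (σ := Fin n) b g σ
    rw [hz, if_pos hdeg.symm] at this
    exact (mem_support_iff.mp hσ) this.symm
  -- A + B = d
  have hABd : A + B = d := by
    have hmul : homogeneousComponent A f * homogeneousComponent B g ≠ 0 :=
      mul_ne_zero hFA hGB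
    obtain ⟨τ, hτ⟩ := MvPolynomial.ne_zero_iff.mp hmul
    have hhom : (homogeneousComponent A f * homogeneousComponent B g).IsHomogeneous (A + B) :=
      (homogeneousComponent_isHomogeneous A f).mul (homogeneousComponent_isHomogeneous B g)
    have hτdeg : τ.degree = A + B := by
      by_contra hne; exact hτ (hhom.coeff_eq_zero hne)
    have hcoeff : coeff τ (f * g) ≠ 0 := by
      rw [coeff_mul_max f g A B hfub hgub hτdeg]; exact hτ
    have := h hcoeff
    change Finsupp.weight (fun _ => 1) τ = d at this
    rw [← Finsupp.degree_eq_weight_one] at this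
    rw [← hτdeg, this]
  -- a + b = d
  have habd : a + b = d := by
    have hmul : homogeneousComponent a f * homogeneousComponent b g ≠ 0 :=
      mul_ne_zero hFa hGb
    obtain ⟨τ, hτ⟩ := MvPolynomial.ne_zero_iff.mp hmul
    have hhom : (homogeneousComponent a f * homogeneousComponent b g).IsHomogeneous (a + b) :=
      (homogeneousComponent_isHomogeneous a f).mul (homogeneousComponent_isHomogeneous b g)
    have hτdeg : τ.degree = a + b := by
      by_contra hne; exact hτ (hhom.coeff_eq_zero hne)
    have hcoeff : coeff τ (f * g) ≠ 0 := by
      rw [coeff_mul_min f g a b hflb hglb hτdeg]; exact hτ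
    have := h hcoeff
    change Finsupp.weight (fun _ => 1) τ = d at this
    rw [← Finsupp.degree_eq_weight_one] at this
    rw [← hτdeg, this]
  -- a ≤ A, b ≤ B
  have haA : a ≤ A := by
    obtain ⟨σ, hσ, hdeg⟩ := exists_max_attain hf
    have := Finset.inf'_le Finsupp.degree hσ
    omega
  have hbB : b ≤ B := by
    obtain ⟨σ, hσ, hdeg⟩ := exists_max_attain hg
    have := Finset.inf'_le Finsupp.degree hσ
    omega
  have haAeq : a = A := by omega
  have hbBeq : b = B := by omega
  refine ⟨?_, ?_, hABd⟩
  · exact isHomogeneous_of_bounds fun σ hσ =>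
      le_antisymm (hfub σ hσ) (haAeq ▸ hflb σ hσ)
  · exact isHomogeneous_of_bounds fun σ hσ =>
      le_antisymm (hgub σ hσ) (hbBeq ▸ hglb σ hσ)

lemma isUnit_of_homog_zero {f : MvPolynomial (Fin n) ℂ} (hf : f ≠ 0)
    (h : f.IsHomogeneous 0) : IsUnit f := by
  have hc : f = C (coeff 0 f) := by
    ext σ
    by_cases hσ : σ = 0
    · subst hσ; simp
    · rw [coeff_C, if_neg (Ne.symm hσ)]
      by_contra hne
      have : σ.degree = 0 := by
        by_contra h2; exact hne (h.coeff_eq_zero h2)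
      exact hσ ((Finsupp.degree_eq_zero_iff σ).mp this)
  rw [hc]
  refine IsUnit.map (C : ℂ →+* MvPolynomial (Fin n) ℂ) (isUnit_iff_ne_zero.mpr ?_)
  intro h0
  exact hf (by rw [hc, h0, map_zero])


lemma not_isUnit_of_homog {f : MvPolynomial (Fin n) ℂ} {e : ℕ} (hf : f ≠ 0)
    (h : f.IsHomogeneous e) (he : 1 ≤ e) : ¬ IsUnit f := by
  rintro ⟨u, rfl⟩
  have h1 : ((u : MvPolynomial (Fin n) ℂ) * (↑u⁻¹ : MvPolynomial (Fin n) ℂ)).IsHomogeneous 0 := by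
    rw [Units.mul_inv]; exact isHomogeneous_one _ _
  have hu2 : (↑u⁻¹ : MvPolynomial (Fin n) ℂ) ≠ 0 := Units.ne_zero _
  obtain ⟨hfh, -, hsum⟩ := factor_homog hf hu2 h1
  have : (u : MvPolynomial (Fin n) ℂ).totalDegree = e := h.totalDegree hf
  have : e = 0 := by omega
  omega

lemma finite_S (e : ℕ) : {σ : Fin n →₀ ℕ | σ.degree = e}.Finite :=
  (Finsupp.finite_of_degree_le e).subset (fun σ hσ => le_of_eq hσ)

lemma ultrafilter_pigeonhole (u : Ultrafilter ℕ) (c : ℕ → ℕ) (N : ℕ) (h : ∀ m, c m < N) :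
    ∃ e < N, {m | c m = e} ∈ u := by
  by_contra hcon
  push_neg at hcon
  have hmem : ∀ e ∈ Finset.range N, {m | c m ≠ e} ∈ u := by
    intro e he
    rcases u.mem_or_compl_mem {m | c m = e} with hm | hm
    · exact absurd hm (hcon e (Finset.mem_range.mp he))
    · exact hm
  have : (⋂ e ∈ Finset.range N, {m | c m ≠ e}) ∈ u :=
    (Filter.biInter_mem (Finset.range N).finite_toSet).mpr hmem
  have hempty : (⋂ e ∈ Finset.range N, {m | c m ≠ e}) = ∅ := by
    ext m
    simp only [Set.mem_iInter, Set.mem_setOf_eq, Set.mem_empty_iff_false, iff_false, not_forall]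
    exact ⟨c m, Finset.mem_range.mpr (h m), fun h' => h' rfl⟩
  rw [hempty] at this
  exact u.neBot.ne (Filter.empty_mem_iff_bot.mp this)


open Filter Topology

lemma tendsto_of_mem_compact (U : Ultrafilter ℕ) {F : Type*} [TopologicalSpace F]
    {K : Set F} (hK : IsCompact K) {x : ℕ → F} (hx : {m | x m ∈ K} ∈ U) :
    ∃ L ∈ K, Filter.Tendsto x U (𝓝 L) := by
  have hle : (Ultrafilter.map x U : Filter F) ≤ Filter.principal K := by
    rw [Ultrafilter.coe_map, Filter.le_principal_iff, Filter.mem_map]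
    exact hx
  obtain ⟨L, hLK, hle2⟩ := hK.ultrafilter_le_nhds (Ultrafilter.map x U) hle
  refine ⟨L, hLK, ?_⟩
  rwa [Ultrafilter.coe_map] at hle2

lemma isCompact_K (e : ℕ) (A : Finset (Fin n →₀ ℕ)) :
    IsCompact {x : (Fin n →₀ ℕ) → ℂ | (∀ σ, σ.degree ≠ e → x σ = 0) ∧ (∀ σ, ‖x σ‖ ≤ 1) ∧
      1 ≤ ∑ σ ∈ A, ‖x σ‖} := by
  have hpi : IsCompact (Set.pi Set.univ fun _ : (Fin n →₀ ℕ) => Metric.closedBall (0:ℂ) 1) :=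
    isCompact_univ_pi fun _ => isCompact_closedBall _ _
  have h1 : IsClosed {x : (Fin n →₀ ℕ) → ℂ | ∀ σ, σ.degree ≠ e → x σ = 0} := by
    have : {x : (Fin n →₀ ℕ) → ℂ | ∀ σ, σ.degree ≠ e → x σ = 0} =
        ⋂ σ ∈ {σ : Fin n →₀ ℕ | σ.degree ≠ e}, {x : (Fin n →₀ ℕ) → ℂ | x σ = 0} := by
      ext x; simp
    rw [this]
    exact isClosed_biInter fun σ _ => isClosed_eq (continuous_apply σ) continuous_const
  have h2 : IsClosed {x : (Fin n →₀ ℕ) → ℂ | ∀ σ, ‖x σ‖ ≤ 1} := by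
    have : {x : (Fin n →₀ ℕ) → ℂ | ∀ σ, ‖x σ‖ ≤ 1} =
        ⋂ σ : Fin n →₀ ℕ, {x : (Fin n →₀ ℕ) → ℂ | ‖x σ‖ ≤ 1} := by
      ext x; simp
    rw [this]
    exact isClosed_iInter fun σ => isClosed_le ((continuous_apply σ).norm) continuous_const
  have h3 : IsClosed {x : (Fin n →₀ ℕ) → ℂ | 1 ≤ ∑ σ ∈ A, ‖x σ‖} :=
    isClosed_le continuous_const (continuous_finset_sum _ fun σ _ => (continuous_apply σ).norm)
  refine hpi.of_isClosed_subset ?_ ?_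
  · have : {x : (Fin n →₀ ℕ) → ℂ | (∀ σ, σ.degree ≠ e → x σ = 0) ∧ (∀ σ, ‖x σ‖ ≤ 1) ∧
        1 ≤ ∑ σ ∈ A, ‖x σ‖} = {x : (Fin n →₀ ℕ) → ℂ | ∀ σ, σ.degree ≠ e → x σ = 0} ∩
        ({x : (Fin n →₀ ℕ) → ℂ | ∀ σ, ‖x σ‖ ≤ 1} ∩ {x : (Fin n →₀ ℕ) → ℂ | 1 ≤ ∑ σ ∈ A, ‖x σ‖}) := by
      ext x; simp [Set.mem_setOf_eq, and_assoc]
    rw [this]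
    exact h1.inter (h2.inter h3)
  · intro x hx
    rw [Set.mem_pi]
    intro σ _
    rw [Metric.mem_closedBall, dist_zero_right]
    exact hx.2.1 σ


open NNReal in
lemma mem_K_normalize {e : ℕ} {f : MvPolynomial (Fin n) ℂ} (hf : f ≠ 0)
    (hfh : f.IsHomogeneous e) :
    0 < (((finite_S (n := n) e).toFinset).sup fun σ => ‖coeff σ f‖₊) ∧
    (fun σ => coeff σ f /
        (((((finite_S (n := n) e).toFinset).sup fun σ => ‖coeff σ f‖₊ : ℝ≥0) : ℝ) : ℂ)) ∈
      {x : (Fin n →₀ ℕ) → ℂ | (∀ σ, σ.degree ≠ e → x σ = 0) ∧ (∀ σ, ‖x σ‖ ≤ 1) ∧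
        1 ≤ ∑ σ ∈ (finite_S (n := n) e).toFinset, ‖x σ‖} := by
  classical
  set A := (finite_S (n := n) e).toFinset with hA
  set ν : ℝ≥0 := A.sup fun σ => ‖coeff σ f‖₊ with hν
  have hmemA : ∀ σ : Fin n →₀ ℕ, σ ∈ A ↔ σ.degree = e := fun σ => Set.Finite.mem_toFinset _
  obtain ⟨σ1, hσ1⟩ := MvPolynomial.ne_zero_iff.mp hf
  have hσ1A : σ1 ∈ A := (hmemA σ1).mpr (degree_of_coeff_ne_zero hfh hσ1)
  have hνpos : 0 < ν := by
    refine lt_of_lt_of_le ?_ (Finset.le_sup hσ1A)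
    simpa using hσ1
  have hνR : (0:ℝ) < (ν : ℝ) := hνpos
  have hle : ∀ σ : Fin n →₀ ℕ, ‖coeff σ f‖ ≤ (ν : ℝ) := by
    intro σ
    by_cases hσ : σ ∈ A
    · exact_mod_cast (Finset.le_sup (f := fun σ => ‖coeff σ f‖₊) hσ : ‖coeff σ f‖₊ ≤ ν)
    · have : coeff σ f = 0 := hfh.coeff_eq_zero (fun h => hσ ((hmemA σ).mpr h))
      simp only [this, norm_zero]
      positivity
  refine ⟨hνpos, ?_, ?_, ?_⟩
  · intro σ hσ
    have : coeff σ f = 0 := hfh.coeff_eq_zero hσ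
    simp [this]
  · intro σ
    rw [norm_div]
    rw [div_le_one (by simpa using hνR)]
    simpa using hle σ
  · obtain ⟨σ2, hσ2A, hσ2⟩ := A.exists_mem_eq_sup ⟨σ1, hσ1A⟩ fun σ => ‖coeff σ f‖₊
    have hterm : ‖coeff σ2 f / (((ν : ℝ) : ℂ))‖ = 1 := by
      rw [norm_div]
      have h2 : ‖coeff σ2 f‖ = (ν : ℝ) := by
        rw [hν, hσ2]
        simp [coe_nnnorm]
      rw [h2]
      simp only [Complex.norm_real, Real.norm_eq_abs, abs_of_pos hνR]
      exact div_self (ne_of_gt hνR)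
    calc (1:ℝ) = ‖coeff σ2 f / (((ν : ℝ) : ℂ))‖ := hterm.symm
    _ ≤ ∑ σ ∈ A, ‖coeff σ f / (((ν : ℝ) : ℂ))‖ :=
        Finset.single_le_sum (f := fun σ => ‖coeff σ f / (((ν : ℝ) : ℂ))‖)
          (fun i _ => norm_nonneg _) hσ2A


end Pert

open Pert Filter Topology

theorem irreducible_stable_under_small_perturbation (n d : ℕ)
    (p : MvPolynomial (Fin n) ℂ) (hp : p.IsHomogeneous d) (hirr : Irreducible p) :
    ∃ s : ℝ, 0 < s ∧
      ∀ q : MvPolynomial (Fin n) ℂ, q.IsHomogeneous d →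
        (∀ i : Fin n →₀ ℕ, ‖coeff i q‖ ≤ s) →
        Irreducible (p + q) := by
  classical
  by_contra hcon
  push_neg at hcon
  -- extract a sequence of counterexamples
  have hex : ∀ m : ℕ, ∃ q : MvPolynomial (Fin n) ℂ, q.IsHomogeneous d ∧
      (∀ i : Fin n →₀ ℕ, ‖coeff i q‖ ≤ 1 / (m + 1)) ∧ ¬ Irreducible (p + q) := by
    intro m
    obtain ⟨q, h1, h2, h3⟩ := hcon (1 / ((m : ℝ) + 1)) (by positivity)
    exact ⟨q, h1, h2, h3⟩
  choose qf hq1 hq2 hq3 using hex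
  have hp0 : p ≠ 0 := hirr.ne_zero
  have hd1 : 1 ≤ d := by
    by_contra hd
    have : d = 0 := by omega
    exact hirr.not_isUnit (isUnit_of_homog_zero hp0 (this ▸ hp))
  have hpq_hom : ∀ m, (p + qf m).IsHomogeneous d := fun m => hp.add (hq1 m)
  -- factorizations into non-units exist
  have hP : ∀ m, ∃ a b : MvPolynomial (Fin n) ℂ,
      p + qf m = a * b ∧ ¬ IsUnit a ∧ ¬ IsUnit b := by
    intro m
    have h3 := hq3 m
    rw [irreducible_iff] at h3
    push_neg at h3
    by_cases hu : IsUnit (p + qf m)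
    · exact absurd hu (not_isUnit_of_homog hu.ne_zero (hpq_hom m) hd1)
    · obtain ⟨a, b, hab, hua, hub⟩ := h3 hu
      exact ⟨a, b, hab, hua, hub⟩
  choose ff gg hfg hfu hgu using hP
  -- the ultrafilter
  let U : Ultrafilter ℕ := Ultrafilter.of atTop
  have hUle : (U : Filter ℕ) ≤ atTop := Ultrafilter.of_le _
  -- a coefficient of p that is nonzero
  obtain ⟨σ0, hσ0⟩ := MvPolynomial.ne_zero_iff.mp hp0
  -- the good set where p + qf m ≠ 0
  have habs0 : 0 < ‖coeff σ0 p‖ := by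
    simpa [AbsoluteValue.pos_iff] using hσ0
  have htend0 : Tendsto (fun m : ℕ => 1 / ((m : ℝ) + 1)) atTop (𝓝 0) :=
    tendsto_one_div_add_atTop_nhds_zero_nat
  have hGat : ∀ᶠ m : ℕ in atTop, 1 / ((m : ℝ) + 1) < ‖coeff σ0 p‖ :=
    htend0.eventually_lt_const habs0
  set G : Set ℕ := {m | 1 / ((m : ℝ) + 1) < ‖coeff σ0 p‖} with hGdef
  have hGU : G ∈ U := hUle hGat
  have hpqne : ∀ m ∈ G, p + qf m ≠ 0 := by
    intro m hm h0
    have : coeff σ0 (qf m) = - coeff σ0 p := by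
      have := congrArg (coeff σ0) h0
      rw [coeff_add, coeff_zero] at this
      linear_combination this
    have h2 := hq2 m σ0
    rw [this, norm_neg] at h2
    have hm' : 1 / ((m : ℝ) + 1) < ‖coeff σ0 p‖ := hm
    exact absurd (lt_of_lt_of_le hm' h2) (lt_irrefl _)
  have hffne : ∀ m ∈ G, ff m ≠ 0 := by
    intro m hm h0
    exact hpqne m hm (by rw [hfg m, h0, zero_mul])
  have hggne : ∀ m ∈ G, gg m ≠ 0 := by
    intro m hm h0
    exact hpqne m hm (by rw [hfg m, h0, mul_zero])
  have hfact : ∀ m ∈ G, (ff m).IsHomogeneous (ff m).totalDegree ∧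
      (gg m).IsHomogeneous (gg m).totalDegree ∧
      (ff m).totalDegree + (gg m).totalDegree = d := by
    intro m hm
    exact factor_homog (hffne m hm) (hggne m hm) (by rw [← hfg m]; exact hpq_hom m)
  -- pigeonhole to fix the degree of the first factor
  obtain ⟨e, hed, heU⟩ := ultrafilter_pigeonhole U (fun m => min (ff m).totalDegree d) (d + 1)
    (fun m => Nat.lt_succ_of_le (min_le_right _ _))
  set T : Set ℕ := {m | min (ff m).totalDegree d = e} ∩ G with hTdef
  have hTU : T ∈ U := Filter.inter_mem heU hGU
  have hTdeg : ∀ m ∈ T, (ff m).totalDegree = e ∧ (gg m).totalDegree = d - e := by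
    rintro m ⟨hm1, hm2⟩
    obtain ⟨-, -, hsum⟩ := hfact m hm2
    have : (ff m).totalDegree ≤ d := by omega
    simp only [Set.mem_setOf_eq, min_eq_left this] at hm1
    omega
  have hTf : ∀ m ∈ T, (ff m).IsHomogeneous e := by
    intro m hm
    have := (hfact m hm.2).1
    rwa [(hTdeg m hm).1] at this
  have hTg : ∀ m ∈ T, (gg m).IsHomogeneous (d - e) := by
    intro m hm
    have := (hfact m hm.2).2.1
    rwa [(hTdeg m hm).2] at this
  -- T is nonempty, giving bounds on e
  obtain ⟨m1, hm1⟩ := Ultrafilter.nonempty_of_mem hTU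
  have he1 : 1 ≤ e := by
    by_contra he0
    have : e = 0 := by omega
    exact hfu m1 (isUnit_of_homog_zero (hffne m1 hm1.2) (this ▸ hTf m1 hm1))
  have hde1 : 1 ≤ d - e := by
    by_contra he0
    have : d - e = 0 := by omega
    exact hgu m1 (isUnit_of_homog_zero (hggne m1 hm1.2) (this ▸ hTg m1 hm1))
  -- normalization data
  set Ae : Finset (Fin n →₀ ℕ) := (finite_S (n := n) e).toFinset with hAe
  set Ag : Finset (Fin n →₀ ℕ) := (finite_S (n := n) (d - e)).toFinset with hAg
  have hmemAe : ∀ σ : Fin n →₀ ℕ, σ ∈ Ae ↔ σ.degree = e := fun σ => Set.Finite.mem_toFinset _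
  have hmemAg : ∀ σ : Fin n →₀ ℕ, σ ∈ Ag ↔ σ.degree = d - e := fun σ => Set.Finite.mem_toFinset _
  set νf : ℕ → NNReal := fun m => Ae.sup fun σ => ‖coeff σ (ff m)‖₊ with hνf
  set νg : ℕ → NNReal := fun m => Ag.sup fun σ => ‖coeff σ (gg m)‖₊ with hνg
  set x : ℕ → (Fin n →₀ ℕ) → ℂ := fun m σ => coeff σ (ff m) / (((νf m : ℝ) : ℂ)) with hx
  set y : ℕ → (Fin n →₀ ℕ) → ℂ := fun m σ => coeff σ (gg m) / (((νg m : ℝ) : ℂ)) with hy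
  set Ke : Set ((Fin n →₀ ℕ) → ℂ) :=
    {z : (Fin n →₀ ℕ) → ℂ | (∀ σ, σ.degree ≠ e → z σ = 0) ∧ (∀ σ, ‖z σ‖ ≤ 1) ∧
      1 ≤ ∑ σ ∈ Ae, ‖z σ‖} with hKe
  set Kg : Set ((Fin n →₀ ℕ) → ℂ) :=
    {z : (Fin n →₀ ℕ) → ℂ | (∀ σ, σ.degree ≠ d - e → z σ = 0) ∧ (∀ σ, ‖z σ‖ ≤ 1) ∧
      1 ≤ ∑ σ ∈ Ag, ‖z σ‖} with hKg
  have hxK : ∀ m ∈ T, 0 < νf m ∧ x m ∈ Ke := fun m hm =>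
    mem_K_normalize (hffne m hm.2) (hTf m hm)
  have hyK : ∀ m ∈ T, 0 < νg m ∧ y m ∈ Kg := fun m hm =>
    mem_K_normalize (hggne m hm.2) (hTg m hm)
  -- limits
  obtain ⟨X, hXK, hXt⟩ := tendsto_of_mem_compact U (isCompact_K e Ae)
    (x := x) (Filter.mem_of_superset hTU fun m hm => (hxK m hm).2)
  obtain ⟨Y, hYK, hYt⟩ := tendsto_of_mem_compact U (isCompact_K (d - e) Ag)
    (x := y) (Filter.mem_of_superset hTU fun m hm => (hyK m hm).2)
  have hXσ : ∀ σ, Tendsto (fun m => x m σ) U (𝓝 (X σ)) := fun σ => tendsto_pi_nhds.mp hXt σ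
  have hYσ : ∀ σ, Tendsto (fun m => y m σ) U (𝓝 (Y σ)) := fun σ => tendsto_pi_nhds.mp hYt σ
  set c : ℕ → (Fin n →₀ ℕ) → ℂ :=
    fun m σ => ∑ uv ∈ Finset.HasAntidiagonal.antidiagonal σ, x m uv.1 * y m uv.2 with hcdef
  have hC : ∀ σ, Tendsto (fun m => c m σ)
      U (𝓝 (∑ uv ∈ Finset.HasAntidiagonal.antidiagonal σ, X uv.1 * Y uv.2)) := fun σ =>
    tendsto_finset_sum _ fun uv _ => (hXσ uv.1).mul (hYσ uv.2)
  -- the key identity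
  set t : ℕ → ℝ := fun m => (νf m : ℝ) * (νg m : ℝ) with ht
  have hkey : ∀ m ∈ T, ∀ σ, coeff σ (p + qf m) = ((t m : ℝ) : ℂ) * c m σ := by
    intro m hm σ
    have hνf0 : ((νf m : ℝ) : ℂ) ≠ 0 := by
      exact_mod_cast ne_of_gt ((hxK m hm).1 : (0:NNReal) < νf m)
    have hνg0 : ((νg m : ℝ) : ℂ) ≠ 0 := by
      exact_mod_cast ne_of_gt ((hyK m hm).1 : (0:NNReal) < νg m)
    rw [hfg m, coeff_mul, hcdef, Finset.mul_sum]
    refine Finset.sum_congr rfl fun uv _ => ?_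
    simp only [hx, hy, ht]
    push_cast
    field_simp
  -- limit of the coefficients of p + qf m
  have hcoeff_lim : ∀ σ, Tendsto (fun m => coeff σ (p + qf m)) U (𝓝 (coeff σ p)) := by
    intro σ
    have hq0 : Tendsto (fun m => coeff σ (qf m)) atTop (𝓝 0) := by
      refine squeeze_zero_norm (fun m => ?_) htend0
      exact hq2 m σ
    have : Tendsto (fun m => coeff σ p + coeff σ (qf m)) atTop (𝓝 (coeff σ p + 0)) :=
      tendsto_const_nhds.add hq0
    rw [add_zero] at this
    exact (this.mono_left hUle).congr fun m => (coeff_add σ p (qf m)).symm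
  -- build the limit polynomials
  set PX : MvPolynomial (Fin n) ℂ := ∑ σ ∈ Ae, monomial σ (X σ) with hPX
  set PY : MvPolynomial (Fin n) ℂ := ∑ σ ∈ Ag, monomial σ (Y σ) with hPY
  have hPXcoeff : ∀ τ, coeff τ PX = X τ := by
    intro τ
    rw [hPX]
    rw [MvPolynomial.coeff_sum]
    simp only [coeff_monomial]
    rw [Finset.sum_ite_eq' Ae τ X]
    by_cases hτ : τ ∈ Ae
    · rw [if_pos hτ]
    · rw [if_neg hτ]
      exact (hXK.1 τ (fun h => hτ ((hmemAe τ).mpr h))).symm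
  have hPYcoeff : ∀ τ, coeff τ PY = Y τ := by
    intro τ
    rw [hPY]
    rw [MvPolynomial.coeff_sum]
    simp only [coeff_monomial]
    rw [Finset.sum_ite_eq' Ag τ Y]
    by_cases hτ : τ ∈ Ag
    · rw [if_pos hτ]
    · rw [if_neg hτ]
      exact (hYK.1 τ (fun h => hτ ((hmemAg τ).mpr h))).symm
  have hPXhom : PX.IsHomogeneous e :=
    IsHomogeneous.sum _ _ _ fun σ hσ => isHomogeneous_monomial _ ((hmemAe σ).mp hσ)
  have hPYhom : PY.IsHomogeneous (d - e) :=
    IsHomogeneous.sum _ _ _ fun σ hσ => isHomogeneous_monomial _ ((hmemAg σ).mp hσ)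
  have hPX0 : PX ≠ 0 := by
    intro h0
    have hz : ∀ σ ∈ Ae, ‖X σ‖ = 0 := by
      intro σ _
      rw [← hPXcoeff σ, h0]
      simp
    have := hXK.2.2
    rw [Finset.sum_congr rfl hz, Finset.sum_const_zero] at this
    linarith
  have hPY0 : PY ≠ 0 := by
    intro h0
    have hz : ∀ σ ∈ Ag, ‖Y σ‖ = 0 := by
      intro σ _
      rw [← hPYcoeff σ, h0]
      simp
    have := hYK.2.2
    rw [Finset.sum_congr rfl hz, Finset.sum_const_zero] at this
    linarith
  have hPXYcoeff : ∀ τ, coeff τ (PX * PY) = ∑ uv ∈ Finset.HasAntidiagonal.antidiagonal τ, X uv.1 * Y uv.2 := by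
    intro τ
    rw [coeff_mul]
    exact Finset.sum_congr rfl fun uv _ => by rw [hPXcoeff, hPYcoeff]
  -- pick a nonzero coefficient of PX * PY
  obtain ⟨τ, hτ⟩ := MvPolynomial.ne_zero_iff.mp (mul_ne_zero hPX0 hPY0)
  have hCτ : (∑ uv ∈ Finset.HasAntidiagonal.antidiagonal τ, X uv.1 * Y uv.2) ≠ 0 := by
    rw [← hPXYcoeff]; exact hτ
  have hcne : ∀ᶠ m in (U : Filter ℕ), c m τ ≠ 0 := (hC τ).eventually_ne hCτ
  -- t m converges
  set tc : ℂ := coeff τ p / (∑ uv ∈ Finset.HasAntidiagonal.antidiagonal τ, X uv.1 * Y uv.2) with htc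
  have htt : Tendsto (fun m => coeff τ (p + qf m) / c m τ) U (𝓝 tc) :=
    (hcoeff_lim τ).div (hC τ) hCτ
  have heqt : (fun m => ((t m : ℝ) : ℂ)) =ᶠ[(U : Filter ℕ)]
      (fun m => coeff τ (p + qf m) / c m τ) := by
    filter_upwards [hTU, hcne] with m hm hc0
    rw [hkey m hm τ, mul_div_assoc, div_self hc0, mul_one]
  have ht_lim : Tendsto (fun m => ((t m : ℝ) : ℂ)) U (𝓝 tc) := htt.congr' heqt.symm
  -- identify the limit coefficientwise
  have hfinal : ∀ σ, coeff σ p = tc * coeff σ (PX * PY) := by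
    intro σ
    have h1 : Tendsto (fun m => ((t m : ℝ) : ℂ) * c m σ) U
        (𝓝 (tc * (∑ uv ∈ Finset.HasAntidiagonal.antidiagonal σ, X uv.1 * Y uv.2))) := ht_lim.mul (hC σ)
    have h2 : (fun m => coeff σ (p + qf m)) =ᶠ[(U : Filter ℕ)]
        (fun m => ((t m : ℝ) : ℂ) * c m σ) := by
      filter_upwards [hTU] with m hm
      exact hkey m hm σ
    have h3 := (hcoeff_lim σ).congr' h2
    rw [hPXYcoeff]
    exact tendsto_nhds_unique h3 h1
  have hp_eq : p = C tc * (PX * PY) := by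
    apply MvPolynomial.ext
    intro σ
    rw [hfinal σ, coeff_C_mul]
  have htc0 : tc ≠ 0 := by
    intro h0
    rw [h0, map_zero, zero_mul] at hp_eq
    exact hp0 hp_eq
  -- contradiction with irreducibility
  rcases hirr.isUnit_or_isUnit (show p = (C tc * PX) * PY by rw [hp_eq]; ring) with h | h
  · have hne : C tc * PX ≠ 0 :=
      mul_ne_zero (fun h0 => htc0 (by simpa using h0)) hPX0
    exact not_isUnit_of_homog hne (hPXhom.C_mul tc) he1 h
  · exact not_isUnit_of_homog hPY0 hPYhom hde1 h
end

section
/- Let d ≥ 1 and let f(x,y) ∈ ℂ[x,y] be a nonzero squarefree homogeneous polynomial of degree d (a square-free binary form). Then the polynomial F(x,y,z) = f(x,y) + z^d is irreducible in ℂ[x,y,z]. -/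
section Kummer

open Polynomial IntermediateField

theorem my_X_pow_sub_C_irreducible (n : ℕ) :
    ∀ (K : Type) [Field K], ∀ i : K, i ^ 2 = -1 → n ≠ 0 → ∀ a : K,
      (∀ p : ℕ, p.Prime → p ∣ n → ∀ b : K, b ^ p ≠ a) →
      Irreducible (Polynomial.X ^ n - Polynomial.C a) := by
  induction n using induction_on_primes with
  | zero => intro K _ i hi hn; exact absurd rfl hn
  | one => intro K _ i hi hn a ha; simpa using Polynomial.irreducible_X_sub_C a
  | prime_mul p m hp IH =>
    intro K _ i hi hn a ha
    have hm : m ≠ 0 := by rintro rfl; simp at hn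
    rw [mul_comm]
    apply X_pow_mul_sub_C_irreducible
      (X_pow_sub_C_irreducible_of_prime hp (ha p hp (dvd_mul_right _ _)))
    intro E _ _ x hx
    have hxi : IsIntegral K x := not_not.mp fun h ↦ by
      simpa only [degree_zero, degree_X_pow_sub_C hp.pos,
        WithBot.natCast_ne_bot] using congr_arg degree (hx.symm.trans (dif_neg h))
    apply IH K⟮x⟯ (algebraMap K K⟮x⟯ i) (by rw [← map_pow, hi, map_neg, map_one]) hm
    intro q hq hqm b hb
    have key : (Algebra.norm K) (AdjoinSimple.gen K x) = (-1) ^ (p + 1) * a := by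
      rw [← adjoin.powerBasis_gen hxi, Algebra.PowerBasis.norm_gen_eq_coeff_zero_minpoly]
      simp [minpoly_gen, hx, hp.ne_zero.symm, pow_succ]
    have hqd : q ∣ p * m := dvd_mul_of_dvd_right hqm p
    have hnb : (Algebra.norm K b) ^ q = (-1) ^ (p + 1) * a := by
      rw [← map_pow, hb, key]
    rcases hp.eq_two_or_odd' with hp2 | hpodd
    · subst hp2
      have hnb' : (Algebra.norm K b) ^ q = -a := by rw [hnb]; ring
      rcases hq.eq_two_or_odd' with hq2 | hqodd
      · subst hq2
        exact ha 2 hq hqd (i * Algebra.norm K b)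
          (by rw [mul_pow, hi]; rw [hnb']; ring)
      · exact ha q hq hqd (-(Algebra.norm K b))
          (by rw [hqodd.neg_pow, hnb']; ring)
    · refine ha q hq hqd (Algebra.norm K b) ?_
      rw [hnb, Even.neg_one_pow hpodd.add_one, one_mul]

end Kummer

open MvPolynomial

theorem my_finSuccEquiv_rename_succ {R : Type*} [CommSemiring R] (n : ℕ)
    (f : MvPolynomial (Fin n) R) :
    finSuccEquiv R n (rename Fin.succ f) = Polynomial.C f := by
  have : ((finSuccEquiv R n).toAlgHom.comp (rename (Fin.succ : Fin n → Fin (n+1)))) =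
      (Polynomial.CAlgHom (R := R) (A := MvPolynomial (Fin n) R)) := by
    apply MvPolynomial.algHom_ext
    intro i
    simp [Polynomial.CAlgHom, finSuccEquiv_X_succ]
  exact congrFun (congrArg DFunLike.coe this) f

theorem squarefree_binary_form_plus_zd_irreducible (d : ℕ) (hd : 1 ≤ d)
    (f : MvPolynomial (Fin 2) ℂ) (hf0 : f ≠ 0) (hfhom : f.IsHomogeneous d)
    (hsf : Squarefree f) :
    Irreducible
      (rename (Fin.castSucc : Fin 2 → Fin 3) f + (X 2 : MvPolynomial (Fin 3) ℂ) ^ d) := by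
  -- f is not a unit
  have hfnu : ¬ IsUnit f := by
    intro hu
    have h0 : constantCoeff f = 0 := by
      have := hfhom.coeff_eq_zero (d := 0) (by
        simpa using (by omega : (0 : ℕ) ≠ d))
      simpa [constantCoeff_eq] using this
    have := hu.map (constantCoeff (σ := Fin 2) (R := ℂ))
    rw [h0] at this
    exact not_isUnit_zero this
  -- transfer along algebra equivalences
  have e3 : (finSuccEquiv ℂ 2) ((renameEquiv ℂ (finRotate 3))
      (rename (Fin.castSucc : Fin 2 → Fin 3) f + (X 2 : MvPolynomial (Fin 3) ℂ) ^ d))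
      = Polynomial.X ^ d - Polynomial.C (-f) := by
    have h1 : (finRotate 3) ∘ (Fin.castSucc : Fin 2 → Fin 3) = Fin.succ := by
      funext i; fin_cases i <;> rfl
    have h2 : (finRotate 3) (2 : Fin 3) = 0 := rfl
    simp only [renameEquiv_apply, map_add, map_pow, rename_rename, h1, rename_X, h2,
      finSuccEquiv_X_zero, my_finSuccEquiv_rename_succ]
    rw [map_neg, sub_neg_eq_add, add_comm]
  have main : Irreducible (Polynomial.X ^ d - Polynomial.C (-f)) := by
    have hmonic : (Polynomial.X ^ d - Polynomial.C (-f)).Monic :=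
      Polynomial.monic_X_pow_sub_C _ (by omega)
    rw [hmonic.irreducible_iff_irreducible_map_fraction_map (K := FractionRing (MvPolynomial (Fin 2) ℂ))]
    have hmap : (Polynomial.X ^ d - Polynomial.C (-f)).map (algebraMap (MvPolynomial (Fin 2) ℂ) (FractionRing (MvPolynomial (Fin 2) ℂ)))
        = Polynomial.X ^ d - Polynomial.C (algebraMap (MvPolynomial (Fin 2) ℂ) (FractionRing (MvPolynomial (Fin 2) ℂ)) (-f)) := by
      rw [Polynomial.map_sub, Polynomial.map_pow, Polynomial.map_X, Polynomial.map_C]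
    rw [hmap]
    apply my_X_pow_sub_C_irreducible d (FractionRing (MvPolynomial (Fin 2) ℂ)) (algebraMap (MvPolynomial (Fin 2) ℂ) (FractionRing (MvPolynomial (Fin 2) ℂ)) (MvPolynomial.C Complex.I))
      (by rw [← map_pow, ← map_pow, Complex.I_sq, map_neg, map_neg, map_one, map_one])
      (by omega)
    intro p hp hpd b hb
    have hbi : IsIntegral (MvPolynomial (Fin 2) ℂ) b :=
      IsIntegral.of_pow hp.pos (hb ▸ isIntegral_algebraMap)
    obtain ⟨t, rfl⟩ := IsIntegrallyClosed.isIntegral_iff.mp hbi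
    rw [← map_pow] at hb
    have ht : t ^ p = -f := IsFractionRing.injective (MvPolynomial (Fin 2) ℂ) (FractionRing (MvPolynomial (Fin 2) ℂ)) hb
    have htf : t * t ∣ f := by
      refine ⟨-(t ^ (p - 2)), ?_⟩
      have : t * t * t ^ (p - 2) = t ^ p := by
        rw [← pow_two, ← pow_add]
        congr 1
        have := hp.two_le
        omega
      rw [mul_neg, this, ht, neg_neg]
    have htu : IsUnit t := hsf t htf
    apply hfnu
    have : f = -(t ^ p) := by rw [ht, neg_neg]
    rw [this]
    exact (htu.pow p).neg
  -- transfer back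
  have h1 := (MulEquiv.irreducible_iff (finSuccEquiv ℂ 2)).mp (e3 ▸ main)
  exact (MulEquiv.irreducible_iff (renameEquiv ℂ (finRotate 3))).mp h1
end

section
/- (Hurwitz) Let d ≥ 1 and let a₁,…,aₙ be nonnegative integers with a₁ + ⋯ + aₙ = 2d. Then the form a₁·x₁^{2d} + ⋯ + aₙ·xₙ^{2d} − 2d·x₁^{a₁}⋯xₙ^{aₙ} belongs to Σ_{n,2d}²; that is, it is a finite sum of squares of real degree-d forms each having at most two monomials. -/
open MvPolynomial Finset

/-- `F_{n,d}^k`: real forms of degree `d` in `n` variables with at most `k` monomials. -/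
def IsFormK (n d k : ℕ) (h : MvPolynomial (Fin n) ℝ) : Prop :=
  h.IsHomogeneous d ∧ h.support.card ≤ k

/-- `Σ_{n,2d}^k`: finite sums of squares of forms in `F_{n,d}^k`. -/
def SigmaSOS (n d k : ℕ) : Set (MvPolynomial (Fin n) ℝ) :=
  { p | ∃ (m : ℕ) (f : Fin m → MvPolynomial (Fin n) ℝ),
      (∀ j, IsFormK n d k (f j)) ∧ p = ∑ j, (f j) ^ 2 }

namespace HurAux

variable {n d : ℕ}

noncomputable def mexp (n : ℕ) (u : Fin n → ℕ) : MvPolynomial (Fin n) ℝ :=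
  ∏ i, X i ^ u i

noncomputable def lin (n d : ℕ) (u : Fin n → ℕ) : MvPolynomial (Fin n) ℝ :=
  ∑ i, C ((u i : ℝ)) * X i ^ (2 * d)

noncomputable def hur (n d : ℕ) (u : Fin n → ℕ) : MvPolynomial (Fin n) ℝ :=
  lin n d u - C ((2 * d : ℕ) : ℝ) * mexp n u

lemma mexp_add (u v : Fin n → ℕ) :
    mexp n (fun k => u k + v k) = mexp n u * mexp n v := by
  simp [mexp, pow_add, Finset.prod_mul_distrib]

lemma mexp_sq (u : Fin n → ℕ) : mexp n (fun k => 2 * u k) = (mexp n u) ^ 2 := by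
  rw [sq, ← mexp_add]
  congr 1; funext k; omega

lemma mexp_homog {u : Fin n → ℕ} {e : ℕ} (h : ∑ i, u i = e) :
    (mexp n u).IsHomogeneous e := by
  subst h
  exact IsHomogeneous.prod _ _ _ fun i _ => isHomogeneous_X_pow i (u i)

lemma mexp_monomial (u : Fin n → ℕ) :
    mexp n u = monomial (Finsupp.equivFunOnFinite.symm u) 1 := by
  rw [monomial_eq, C_1, one_mul, Finsupp.prod_fintype _ _ fun i => pow_zero _]
  simp [mexp]

lemma card_support_mexp_le (u : Fin n → ℕ) : (mexp n u).support.card ≤ 1 := by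
  rw [mexp_monomial]
  exact le_trans (Finset.card_le_card support_monomial_subset) (le_of_eq (Finset.card_singleton _))

lemma formK_sub {u v : Fin n → ℕ} (hu : ∑ i, u i = d) (hv : ∑ i, v i = d) :
    IsFormK n d 2 (mexp n u - mexp n v) := by
  constructor
  · exact (mexp_homog hu).sub (mexp_homog hv)
  · classical
    calc (mexp n u - mexp n v).support.card
        ≤ ((mexp n u).support ∪ (mexp n v).support).card :=
          Finset.card_le_card (MvPolynomial.support_sub _ _ _)
      _ ≤ (mexp n u).support.card + (mexp n v).support.card := Finset.card_union_le _ _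
      _ ≤ 1 + 1 := by gcongr <;> exact card_support_mexp_le _
      _ = 2 := rfl

lemma formK_Cmul (c : ℝ) {f : MvPolynomial (Fin n) ℝ} {k : ℕ} (hf : IsFormK n d k f) :
    IsFormK n d k (C c * f) := by
  refine ⟨hf.1.C_mul c, ?_⟩
  refine le_trans (Finset.card_le_card ?_) hf.2
  rw [MvPolynomial.C_mul']
  exact MvPolynomial.support_smul

lemma zero_mem_S {k : ℕ} : (0 : MvPolynomial (Fin n) ℝ) ∈ SigmaSOS n d k :=
  ⟨0, fun j => j.elim0, fun j => j.elim0, by simp⟩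

lemma add_mem_S {k : ℕ} {p q : MvPolynomial (Fin n) ℝ}
    (hp : p ∈ SigmaSOS n d k) (hq : q ∈ SigmaSOS n d k) : p + q ∈ SigmaSOS n d k := by
  obtain ⟨m1, f, hf, rfl⟩ := hp
  obtain ⟨m2, g, hg, rfl⟩ := hq
  refine ⟨m1 + m2, Fin.addCases f g, ?_, ?_⟩
  · intro j
    refine Fin.addCases (motive := fun j => IsFormK n d k (Fin.addCases f g j)) ?_ ?_ j
    · intro i; simpa using hf i
    · intro i; simpa using hg i
  · rw [Fin.sum_univ_add]; simp

lemma sq_mem_S {f : MvPolynomial (Fin n) ℝ} (hf : IsFormK n d 2 f) :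
    f ^ 2 ∈ SigmaSOS n d 2 :=
  ⟨1, fun _ => f, fun _ => hf, by simp⟩

lemma Cmul_mem_S {c : ℝ} (hc : 0 ≤ c) {p : MvPolynomial (Fin n) ℝ}
    (hp : p ∈ SigmaSOS n d 2) : C c * p ∈ SigmaSOS n d 2 := by
  obtain ⟨m, f, hf, rfl⟩ := hp
  refine ⟨m, fun j => C (Real.sqrt c) * f j, fun j => formK_Cmul _ (hf j), ?_⟩
  rw [Finset.mul_sum]
  refine Finset.sum_congr rfl fun j _ => ?_
  rw [mul_pow, ← C_pow, Real.sq_sqrt hc]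

lemma sum_mem_S {ι : Type*} (s : Finset ι) (g : ι → MvPolynomial (Fin n) ℝ)
    (h : ∀ t ∈ s, g t ∈ SigmaSOS n d 2) : (∑ t ∈ s, g t) ∈ SigmaSOS n d 2 :=
  Finset.sum_induction g (· ∈ SigmaSOS n d 2) (fun _ _ => add_mem_S) zero_mem_S h

lemma nsmul_mem_S (k : ℕ) {p : MvPolynomial (Fin n) ℝ}
    (hp : p ∈ SigmaSOS n d 2) : k • p ∈ SigmaSOS n d 2 := by
  have : (k : MvPolynomial (Fin n) ℝ) = C ((k : ℕ) : ℝ) := (map_natCast C k).symm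
  rw [nsmul_eq_mul, this]
  exact Cmul_mem_S (by positivity) hp

/-- Telescoping: discrete second-difference summation (Abel / Green's function core). -/
lemma T1 {A : Type*} [CommRing A] (ν : ℕ → A) (q : ℕ) :
    ∑ t ∈ Finset.range q, ((t : A) + 1) * (ν t - 2 * ν (t + 1) + ν (t + 2)) =
      ν 0 - ((q : A) + 1) * ν q + (q : A) * ν (q + 1) := by
  induction q with
  | zero => simp
  | succ q ih =>
    rw [Finset.sum_range_succ, ih]
    push_cast
    ring

/-- Additive version of splitting a sum over two distinguished indices. -/
lemma sum_three {M : Type*} [AddCommMonoid M] {i j : Fin n} (hij : i ≠ j) (f : Fin n → M) :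
    ∑ k, f k = f i + f j + ∑ k ∈ (Finset.univ.erase i).erase j, f k := by
  rw [← Finset.add_sum_erase _ f (Finset.mem_univ i)]
  rw [← Finset.add_sum_erase _ f (Finset.mem_erase.2 ⟨hij.symm, Finset.mem_univ j⟩)]
  rw [add_assoc]

/-- The vector `b` with coordinates `i`, `j` replaced by `A`, `B`. -/
def dub (b : Fin n → ℕ) (i j : Fin n) (A B : ℕ) : Fin n → ℕ :=
  fun k => if k = i then A else if k = j then B else b k

lemma sum_dub {i j : Fin n} (hij : i ≠ j) (b : Fin n → ℕ) (A B : ℕ) :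
    (∑ k, dub b i j A B k) + b i + b j = A + B + ∑ k, b k := by
  rw [sum_three hij (dub b i j A B), sum_three hij b]
  have h1 : dub b i j A B i = A := by simp [dub]
  have h2 : dub b i j A B j = B := by simp [dub, hij.symm]
  have h3 : ∑ k ∈ (Finset.univ.erase i).erase j, dub b i j A B k
      = ∑ k ∈ (Finset.univ.erase i).erase j, b k := by
    refine Finset.sum_congr rfl fun k hk => ?_
    have hkj : k ≠ j := (Finset.mem_erase.1 hk).1
    have hki : k ≠ i := (Finset.mem_erase.1 (Finset.mem_erase.1 hk).2).1
    simp [dub, hki, hkj]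
  rw [h1, h2, h3]
  ring

lemma exists_split (a : Fin n → ℕ) :
    ∀ e, e ≤ ∑ i, a i → ∃ b : Fin n → ℕ, (∀ k, b k ≤ a k) ∧ ∑ i, b i = e := by
  intro e
  induction e with
  | zero => exact fun _ => ⟨fun _ => 0, fun _ => Nat.zero_le _, by simp⟩
  | succ e ih =>
    intro he
    obtain ⟨b, hb1, hb2⟩ := ih (by omega)
    have hex : ∃ i, b i < a i := by
      by_contra hcon
      push_neg at hcon
      have : ∑ i, a i ≤ ∑ i, b i := Finset.sum_le_sum fun i _ => hcon i
      omega
    obtain ⟨i, hi⟩ := hex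
    refine ⟨Function.update b i (b i + 1), ?_, ?_⟩
    · intro k
      rcases eq_or_ne k i with rfl | hk
      · simp; omega
      · simp [Function.update_of_ne hk]; exact hb1 k
    · rw [Finset.sum_update_of_mem (Finset.mem_univ i)]
      have h4 := Finset.sum_eq_sum_sdiff_singleton_add (Finset.mem_univ i) b
      omega

lemma hur_degenerate (b : Fin n → ℕ) (hb : ∑ i, b i = d)
    (h1 : ∀ k l : Fin n, k ≠ l → b k = 0 ∨ b l = 0) :
    hur n d (fun k => 2 * b k) = 0 := by
  by_cases hz : ∃ k0, b k0 ≠ 0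
  · obtain ⟨k0, hk0⟩ := hz
    have hoth : ∀ l, l ≠ k0 → b l = 0 := fun l hl => (h1 l k0 hl).resolve_right hk0
    have hbk0 : b k0 = d := by
      rw [← hb, Finset.sum_eq_single k0 (fun l _ hl => hoth l hl) (fun h => absurd (Finset.mem_univ k0) h)]
    have hlin : lin n d (fun k => 2 * b k) = C ((2 * d : ℕ) : ℝ) * X k0 ^ (2 * d) := by
      rw [lin, Finset.sum_eq_single k0]
      · rw [hbk0]
      · intro l _ hl; rw [hoth l hl]; simp
      · intro h; exact absurd (Finset.mem_univ k0) h
    have hmex : mexp n (fun k => 2 * b k) = X k0 ^ (2 * d) := by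
      rw [mexp, Finset.prod_eq_single k0]
      · rw [hbk0]
      · intro l _ hl; simp [hoth l hl]
      · intro h; exact absurd (Finset.mem_univ k0) h
    rw [hur, hlin, hmex, sub_self]
  · push_neg at hz
    have hd0 : d = 0 := by
      rw [← hb, Finset.sum_eq_zero fun i _ => hz i]
    subst hd0
    have hlin : lin n 0 (fun k => 2 * b k) = 0 :=
      Finset.sum_eq_zero fun i _ => by simp [hz i]
    rw [hur, hlin]
    norm_num

lemma nsmul_lin (s : ℕ) (u : Fin n → ℕ) :
    s • lin n d u = lin n d (fun k => s * u k) := by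
  rw [lin, lin, Finset.smul_sum]
  refine Finset.sum_congr rfl fun k _ => ?_
  rw [nsmul_eq_mul, ← map_natCast (C : ℝ →+* MvPolynomial (Fin n) ℝ) s, ← mul_assoc, ← map_mul]
  norm_cast

lemma lin_add (u v : Fin n → ℕ) :
    lin n d u + lin n d v = lin n d (fun k => u k + v k) := by
  rw [lin, lin, lin, ← Finset.sum_add_distrib]
  refine Finset.sum_congr rfl fun k _ => ?_
  rw [← add_mul, ← map_add]
  norm_cast

lemma cast_add_one_eq_C (s : ℕ) :
    ((s : MvPolynomial (Fin n) ℝ) + 1) = C ((s : ℝ) + 1) := by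
  rw [map_add, map_natCast, map_one]

lemma even_aux : ∀ (N : ℕ) (b : Fin n → ℕ),
    (Finset.univ.filter fun k => b k ≠ 0).card ≤ N → ∑ i, b i = d →
    hur n d (fun k => 2 * b k) ∈ SigmaSOS n d 2 := by
  intro N
  induction N with
  | zero =>
    intro b hcard hb
    have hall : ∀ k, b k = 0 := by
      intro k
      by_contra hk
      have hmem : k ∈ Finset.univ.filter fun k => b k ≠ 0 := by simp [hk]
      have := Finset.card_pos.2 ⟨k, hmem⟩
      omega
    rw [hur_degenerate b hb (fun k l _ => Or.inl (hall k))]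
    exact zero_mem_S
  | succ N IH =>
    intro b hcard hb
    by_cases hex : ∃ i j : Fin n, i ≠ j ∧ b i ≠ 0 ∧ b j ≠ 0
    swap
    · push_neg at hex
      rw [hur_degenerate b hb ?_]
      · exact zero_mem_S
      · intro k l hkl
        by_cases hbk : b k = 0
        · exact Or.inl hbk
        · exact Or.inr (hex k l hkl hbk)
    obtain ⟨i, j, hij, hbine, hbjne⟩ := hex
    obtain ⟨p', hp'⟩ : ∃ p', b i = p' + 1 := ⟨b i - 1, by omega⟩
    have hq1 : 1 ≤ b j := Nat.pos_of_ne_zero hbjne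
    have hp1 : 1 ≤ b i := Nat.pos_of_ne_zero hbine
    set m := b i + b j with hm
    set B : Fin n → ℕ := fun k => 2 * b k with hB
    set bi : Fin n → ℕ := dub b i j m 0 with hbi'
    set bj : Fin n → ℕ := dub b i j 0 m with hbj'
    set ν : ℕ → MvPolynomial (Fin n) ℝ :=
      fun t => mexp n (dub B i j (2 * (m - t)) (2 * t)) with hν
    set w : ℕ → MvPolynomial (Fin n) ℝ := fun t =>
      mexp n (dub b i j (m - t) t) - mexp n (dub b i j (m - t - 2) (t + 2)) with hw
    -- sums of dub vectors
    have hsum_dub : ∀ A Bv : ℕ, (∑ k, dub b i j A Bv k) + b i + b j = A + Bv + d := by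
      intro A Bv
      rw [sum_dub hij, hb]
    -- squares of the chain binomials
    have hsq_w : ∀ t, t + 2 ≤ m → (w t) ^ 2 = ν t - 2 * ν (t + 1) + ν (t + 2) := by
      intro t ht
      simp only [hw, hν]
      have e1 : (mexp n (dub b i j (m - t) t)) ^ 2
          = mexp n (dub B i j (2 * (m - t)) (2 * t)) := by
        rw [← mexp_sq]
        congr 1; funext k
        simp only [dub, hB]
        split_ifs <;> rfl
      have e2 : (mexp n (dub b i j (m - t - 2) (t + 2))) ^ 2
          = mexp n (dub B i j (2 * (m - (t + 2))) (2 * (t + 2))) := by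
        rw [← mexp_sq]
        congr 1; funext k
        simp only [dub, hB]
        split_ifs <;> omega
      have e3 : mexp n (dub b i j (m - t) t) * mexp n (dub b i j (m - t - 2) (t + 2))
          = mexp n (dub B i j (2 * (m - (t + 1))) (2 * (t + 1))) := by
        rw [← mexp_add]
        congr 1; funext k
        simp only [dub, hB]
        split_ifs <;> omega
      rw [sub_sq, mul_assoc, e1, e2, e3]
    -- the binomials are forms with ≤ 2 terms
    have hw_form : ∀ t, t + 2 ≤ m → IsFormK n d 2 (w t) := by
      intro t ht
      simp only [hw]
      apply formK_sub
      · have := hsum_dub (m - t) t; omega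
      · have := hsum_dub (m - t - 2) (t + 2); omega
    -- monomial identifications
    have hmexB : mexp n B = ν (b j) := by
      simp only [hν]
      congr 1; funext k
      simp only [dub, hB]
      split_ifs with h1 h2
      · subst h1; omega
      · subst h2; rfl
      · rfl
    have hmexBi : mexp n (fun k => 2 * bi k) = ν 0 := by
      simp only [hν]
      congr 1; funext k
      simp only [hbi', dub, hB]
      split_ifs <;> omega
    have hmexBj : mexp n (fun k => 2 * bj k) = ν m := by
      simp only [hν]
      congr 1; funext k
      simp only [hbj', dub, hB]
      split_ifs <;> omega
    -- linear part relation
    have hlinrel : m • lin n d B = b i • lin n d (fun k => 2 * bi k)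
        + b j • lin n d (fun k => 2 * bj k) := by
      rw [nsmul_lin, nsmul_lin, nsmul_lin, lin_add]
      congr 1; funext k
      simp only [hbi', hbj', dub, hB, hm]
      split_ifs with h1 h2
      · subst h1; ring
      · subst h2; ring
      · ring
    -- the two Green's-function square sums
    set S1 := ∑ t ∈ Finset.range (b j),
        ((t : MvPolynomial (Fin n) ℝ) + 1) * (w t) ^ 2 with hS1
    set S2 := ∑ s ∈ Finset.range p',
        ((s : MvPolynomial (Fin n) ℝ) + 1) * (w (m - s - 2)) ^ 2 with hS2
    have hH2 : S1 = ν 0 - ((b j : MvPolynomial (Fin n) ℝ) + 1) * ν (b j)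
        + (b j : MvPolynomial (Fin n) ℝ) * ν (b j + 1) := by
      have hcongr : S1 = ∑ t ∈ Finset.range (b j),
          ((t : MvPolynomial (Fin n) ℝ) + 1) * (ν t - 2 * ν (t + 1) + ν (t + 2)) := by
        refine Finset.sum_congr rfl fun t ht => ?_
        have ht' := Finset.mem_range.1 ht
        rw [hsq_w t (by omega)]
      rw [hcongr, T1]
    have hH3 : S2 = ν m - ((p' : MvPolynomial (Fin n) ℝ) + 1) * ν (b j + 1)
        + (p' : MvPolynomial (Fin n) ℝ) * ν (b j) := by
      have hcongr : S2 = ∑ s ∈ Finset.range p',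
          ((s : MvPolynomial (Fin n) ℝ) + 1) *
            ((fun s => ν (m - s)) s - 2 * (fun s => ν (m - s)) (s + 1)
              + (fun s => ν (m - s)) (s + 2)) := by
        refine Finset.sum_congr rfl fun s hs => ?_
        have hs' := Finset.mem_range.1 hs
        have h2m : s + 2 ≤ m := by omega
        rw [hsq_w (m - s - 2) (by omega)]
        rw [show m - s - 2 + 1 = m - (s + 1) by omega,
          show m - s - 2 + 2 = m - s by omega,
          show m - s - 2 = m - (s + 2) by omega]
        ring
      rw [hcongr, T1 (fun s => ν (m - s)) p']
      rw [show m - 0 = m from rfl, show m - p' = b j + 1 by omega,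
        show m - (p' + 1) = b j by omega]
    -- the key identity
    have hkey : m • hur n d B = b i • hur n d (fun k => 2 * bi k)
        + b j • hur n d (fun k => 2 * bj k)
        + (2 * d) • (((b i : MvPolynomial (Fin n) ℝ)) * S1
          + ((b j : MvPolynomial (Fin n) ℝ)) * S2) := by
      rw [hur, hur, hur, hmexB, hmexBi, hmexBj, hH2, hH3]
      rw [smul_sub, smul_sub, smul_sub, hlinrel]
      simp only [nsmul_eq_mul, map_natCast]
      rw [hm, hp']
      push_cast
      ring
    -- memberships
    have hSmem : ∀ (A : ℕ) (SS : MvPolynomial (Fin n) ℝ), SS ∈ SigmaSOS n d 2 →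
        ((A : MvPolynomial (Fin n) ℝ)) * SS ∈ SigmaSOS n d 2 := by
      intro A SS hSS
      rw [← map_natCast (C : ℝ →+* MvPolynomial (Fin n) ℝ) A]
      exact Cmul_mem_S (by positivity) hSS
    have hS1mem : S1 ∈ SigmaSOS n d 2 := by
      rw [hS1]
      refine sum_mem_S _ _ fun t ht => ?_
      have ht' := Finset.mem_range.1 ht
      rw [cast_add_one_eq_C]
      exact Cmul_mem_S (by positivity) (sq_mem_S (hw_form t (by omega)))
    have hS2mem : S2 ∈ SigmaSOS n d 2 := by
      rw [hS2]
      refine sum_mem_S _ _ fun s hs => ?_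
      have hs' := Finset.mem_range.1 hs
      rw [cast_add_one_eq_C]
      refine Cmul_mem_S (by positivity) (sq_mem_S (hw_form (m - s - 2) (by omega)))
    have hbimem : hur n d (fun k => 2 * bi k) ∈ SigmaSOS n d 2 := by
      refine IH bi ?_ ?_
      · have hsub : (Finset.univ.filter fun k => bi k ≠ 0) ⊆
            (Finset.univ.filter fun k => b k ≠ 0).erase j := by
          intro k hk
          simp only [Finset.mem_filter, Finset.mem_univ, true_and] at hk
          have hkj : k ≠ j := by
            rintro rfl
            exact hk (by simp [hbi', dub, hij.symm])
          refine Finset.mem_erase.2 ⟨hkj, Finset.mem_filter.2 ⟨Finset.mem_univ _, ?_⟩⟩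
          by_cases hki : k = i
          · subst hki; exact hbine
          · simpa [hbi', dub, hki, hkj] using hk
        have hjmem : j ∈ Finset.univ.filter (fun k => b k ≠ 0) := by simp [hbjne]
        have := Finset.card_erase_of_mem hjmem
        have := Finset.card_le_card hsub
        omega
      · rw [hbi']
        have := hsum_dub m 0
        omega
    have hbjmem : hur n d (fun k => 2 * bj k) ∈ SigmaSOS n d 2 := by
      refine IH bj ?_ ?_
      · have hsub : (Finset.univ.filter fun k => bj k ≠ 0) ⊆
            (Finset.univ.filter fun k => b k ≠ 0).erase i := by
          intro k hk
          simp only [Finset.mem_filter, Finset.mem_univ, true_and] at hk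
          have hki : k ≠ i := by
            rintro rfl
            exact hk (by simp [hbj', dub])
          refine Finset.mem_erase.2 ⟨hki, Finset.mem_filter.2 ⟨Finset.mem_univ _, ?_⟩⟩
          by_cases hkj : k = j
          · subst hkj; exact hbjne
          · simpa [hbj', dub, hki, hkj] using hk
        have himem : i ∈ Finset.univ.filter (fun k => b k ≠ 0) := by simp [hbine]
        have := Finset.card_erase_of_mem himem
        have := Finset.card_le_card hsub
        omega
      · rw [hbj']
        have := hsum_dub 0 m
        omega
    have hmne : (m : ℝ) ≠ 0 := Nat.cast_ne_zero.mpr (by omega)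
    have hfinal : hur n d B = C ((m : ℝ)⁻¹) * (m • hur n d B) := by
      rw [nsmul_eq_mul, ← map_natCast (C : ℝ →+* MvPolynomial (Fin n) ℝ) m, ← mul_assoc,
        ← map_mul, inv_mul_cancel₀ hmne, map_one, one_mul]
    rw [hfinal, hkey]
    refine Cmul_mem_S (by positivity) ?_
    refine add_mem_S (add_mem_S (nsmul_mem_S _ hbimem) (nsmul_mem_S _ hbjmem)) ?_
    exact nsmul_mem_S _ (add_mem_S (hSmem _ _ hS1mem) (hSmem _ _ hS2mem))

end HurAux

open HurAux in
theorem hurwitz_agi_form_is_sobs (n d : ℕ) (hd : 1 ≤ d)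
    (a : Fin n → ℕ) (ha : ∑ i, a i = 2 * d) :
    (∑ i, C ((a i : ℝ)) * X i ^ (2 * d)) -
        C ((2 * d : ℕ) : ℝ) * ∏ i, X i ^ (a i) ∈ SigmaSOS n d 2 := by
  have hgoal : (∑ i, C ((a i : ℝ)) * X i ^ (2 * d)) -
      C ((2 * d : ℕ) : ℝ) * ∏ i, X i ^ (a i) = hur n d a := rfl
  rw [hgoal]
  obtain ⟨b, hble, hbsum⟩ := exists_split a d (by omega)
  set c : Fin n → ℕ := fun k => a k - b k with hc
  have hbc : ∀ k, b k + c k = a k := by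
    intro k
    have := hble k
    simp only [hc]
    omega
  have hcsum : ∑ i, c i = d := by
    have h1 : ∑ i, (b i + c i) = ∑ i, a i := Finset.sum_congr rfl fun k _ => hbc k
    rw [Finset.sum_add_distrib] at h1
    omega
  have key1 : (2 : ℕ) • hur n d a = hur n d (fun k => 2 * b k)
      + hur n d (fun k => 2 * c k)
      + (2 * d) • (mexp n b - mexp n c) ^ 2 := by
    rw [hur, hur, hur]
    have hlin : (2 : ℕ) • lin n d a
        = lin n d (fun k => 2 * b k) + lin n d (fun k => 2 * c k) := by
      rw [nsmul_lin, lin_add]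
      congr 1; funext k
      have := hbc k
      omega
    have hma : mexp n a = mexp n b * mexp n c := by
      rw [← mexp_add]
      congr 1; funext k
      exact (hbc k).symm
    have hsq : (mexp n b - mexp n c) ^ 2
        = mexp n (fun k => 2 * b k) - 2 * (mexp n b * mexp n c)
          + mexp n (fun k => 2 * c k) := by
      rw [sub_sq, mul_assoc, mexp_sq, mexp_sq]
    rw [smul_sub, hlin, hma, hsq]
    simp only [nsmul_eq_mul, map_natCast]
    push_cast
    ring
  have hbmem : hur n d (fun k => 2 * b k) ∈ SigmaSOS n d 2 :=
    even_aux _ b le_rfl hbsum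
  have hcmem : hur n d (fun k => 2 * c k) ∈ SigmaSOS n d 2 :=
    even_aux _ c le_rfl hcsum
  have hsqmem : (2 * d) • (mexp n b - mexp n c) ^ 2 ∈ SigmaSOS n d 2 :=
    nsmul_mem_S _ (sq_mem_S (formK_sub hbsum hcsum))
  have hfin : hur n d a = C ((2 : ℝ)⁻¹) * ((2 : ℕ) • hur n d a) := by
    rw [nsmul_eq_mul, ← map_natCast (C : ℝ →+* MvPolynomial (Fin n) ℝ) 2, ← mul_assoc,
      ← map_mul]
    norm_num
  rw [hfin, key1]
  exact Cmul_mem_S (by positivity) (add_mem_S (add_mem_S hbmem hcmem) hsqmem)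
end

section
/- Let n ≥ 2, d ≥ 1, and 2 ≤ k ≤ N(n,d) = C(n+d-1, n-1). Then the dual cones satisfy the strict inclusion (Σ_{n,2d}^k)* ⊊ (Σ_{n,2d}^{k-1})*: every form in (Σ_{n,2d}^k)* lies in (Σ_{n,2d}^{k-1})*, and there exists a form p of degree 2d with p ∈ (Σ_{n,2d}^{k-1})* but p ∉ (Σ_{n,2d}^k)*. -/
open MvPolynomial Finset

set_option maxHeartbeats 2000000

/-- The Fischer inner product of two `n`-ary forms of degree `2d`. -/
noncomputable def fischer (n d : ℕ) (p q : MvPolynomial (Fin n) ℝ) : ℝ :=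
  ∑ i ∈ p.support ∪ q.support,
    (((∏ j, Nat.factorial (i j) : ℕ) : ℝ) / ((2 * d).factorial : ℝ)) *
      coeff i p * coeff i q

/-- The dual cone `(Σ_{n,2d}^k)*`. -/
def DualSigma (n d k : ℕ) : Set (MvPolynomial (Fin n) ℝ) :=
  { p | p.IsHomogeneous (2 * d) ∧
      ∀ h : MvPolynomial (Fin n) ℝ, h.IsHomogeneous d → h.support.card ≤ k →
        0 ≤ fischer n d p (h ^ 2) }

open Polynomial Finset

/-- Rolle set: between roots of p there are roots of p'. -/
lemma rolle_finset : ∀ (m : ℕ) (p : Polynomial ℝ) (S : Finset ℝ), S.card = m + 1 →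
    (∀ t ∈ S, Polynomial.eval t p = 0) →
    ∃ S' : Finset ℝ, S'.card = m ∧ ∀ u ∈ S',
      Polynomial.eval u (Polynomial.derivative p) = 0 ∧
      (∃ a ∈ S, a < u) ∧ (∃ b ∈ S, u < b) := by
  intro m
  induction m with
  | zero => intro p S _ _; exact ⟨∅, by simp⟩
  | succ m IH =>
    intro p S hcard hroots
    have hne : S.Nonempty := by
      rw [← Finset.card_pos, hcard]; omega
    set a := S.min' hne with ha
    set S₂ := S.erase a with hS₂
    have haS : a ∈ S := S.min'_mem hne
    have hcard₂ : S₂.card = m + 1 := by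
      rw [hS₂, Finset.card_erase_of_mem haS, hcard]
      omega
    have hne₂ : S₂.Nonempty := by rw [← Finset.card_pos, hcard₂]; omega
    set b := S₂.min' hne₂ with hb
    have hbS₂ : b ∈ S₂ := S₂.min'_mem hne₂
    have hbS : b ∈ S := Finset.mem_of_mem_erase hbS₂
    have hab : a < b := by
      have hne' : b ≠ a := Finset.ne_of_mem_erase hbS₂
      exact lt_of_le_of_ne (S.min'_le b hbS) (Ne.symm hne')
    obtain ⟨u, huIoo, hu⟩ := exists_deriv_eq_zero hab (p.continuous.continuousOn)
      ((hroots a haS).trans (hroots b hbS).symm)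
    rw [Polynomial.deriv] at hu
    obtain ⟨S'', hcard'', hprop''⟩ := IH p S₂ hcard₂ (fun t ht => hroots t (Finset.mem_of_mem_erase ht))
    have huS'' : u ∉ S'' := by
      intro huS
      obtain ⟨_, ⟨a', ha', haa'⟩, _⟩ := hprop'' u huS
      exact lt_irrefl u (lt_trans huIoo.2 (lt_of_le_of_lt (S₂.min'_le a' ha') haa'))
    refine ⟨insert u S'', ?_, ?_⟩
    · rw [Finset.card_insert_of_notMem huS'', hcard'']
    · intro v hv
      rcases Finset.mem_insert.mp hv with rfl | hv
      · exact ⟨hu, ⟨a, haS, huIoo.1⟩, ⟨b, hbS, huIoo.2⟩⟩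
      · obtain ⟨h1, ⟨a', ha', h2⟩, ⟨b', hb', h3⟩⟩ := hprop'' v hv
        exact ⟨h1, ⟨a', Finset.mem_of_mem_erase ha', h2⟩, ⟨b', Finset.mem_of_mem_erase hb', h3⟩⟩

open Polynomial Finset


lemma deriv_support_card (q : Polynomial ℝ) (h0 : (0:ℕ) ∈ q.support) :
    (Polynomial.derivative q).support.card + 1 ≤ q.support.card := by
  have h1 : (Polynomial.derivative q).support.card ≤ (q.support.erase 0).card := by
    apply Finset.card_le_card_of_injOn (fun i => i + 1)
    · intro i hi
      rw [Finset.mem_coe, Polynomial.mem_support_iff, Polynomial.coeff_derivative] at hi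
      have : q.coeff (i + 1) ≠ 0 := fun h => hi (by rw [h, zero_mul])
      exact Finset.mem_erase.mpr ⟨Nat.succ_ne_zero i, Polynomial.mem_support_iff.mpr this⟩
    · intro i _ j _ h; simpa using h
  rw [Finset.card_erase_of_mem h0] at h1
  have h2 : 1 ≤ q.support.card := Finset.card_pos.mpr ⟨0, h0⟩
  omega

/-- A real polynomial with at most `|S|` terms vanishing on a set `S` of positive reals is zero. -/
lemma descartes : ∀ (m : ℕ) (S : Finset ℝ) (p : Polynomial ℝ), S.card = m →
    (∀ t ∈ S, 0 < t ∧ Polynomial.eval t p = 0) → p.support.card ≤ S.card → p = 0 := by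
  intro m
  induction m using Nat.strong_induction_on with
  | _ m IH =>
    intro S p hScard hroots hsupp
    by_contra hp
    set v := p.natTrailingDegree with hv
    have hdvd : (Polynomial.X : Polynomial ℝ) ^ v ∣ p :=
      Polynomial.X_pow_dvd_iff.mpr fun d hd => Polynomial.coeff_eq_zero_of_lt_natTrailingDegree hd
    obtain ⟨q, hq⟩ := hdvd
    have hq0 : q.coeff 0 ≠ 0 := by
      have h1 : p.coeff v ≠ 0 := Polynomial.coeff_natTrailingDegree_ne_zero.mpr hp
      have h2 : ((Polynomial.X : Polynomial ℝ) ^ v * q).coeff (0 + v) = q.coeff 0 := Polynomial.coeff_X_pow_mul q v 0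
      rw [zero_add] at h2
      rw [hq, h2] at h1; exact h1
    have hq0mem : (0 : ℕ) ∈ q.support := Polynomial.mem_support_iff.mpr hq0
    have hqsupp : q.support.card ≤ p.support.card := by
      apply Finset.card_le_card_of_injOn (fun i => i + v)
      · intro i hi
        rw [Finset.mem_coe, Polynomial.mem_support_iff] at hi ⊢
        rwa [hq, Polynomial.coeff_X_pow_mul]
      · intro i _ j _ h; simpa using h
    have heval : ∀ t ∈ S, Polynomial.eval t q = 0 := by
      intro t ht
      have h2 := (hroots t ht).2
      rw [hq, Polynomial.eval_mul, Polynomial.eval_pow, Polynomial.eval_X] at h2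
      exact (mul_eq_zero.mp h2).elim
        (fun h => absurd h (ne_of_gt (pow_pos (hroots t ht).1 v))) id
    have hpsupp : 1 ≤ p.support.card :=
      Finset.card_pos.mpr (Polynomial.nonempty_support_iff.mpr hp)
    have hm1 : 1 ≤ m := by omega
    obtain ⟨S', hS'card, hS'⟩ := rolle_finset (m - 1) q S (by omega) heval
    have hq' : Polynomial.derivative q = 0 := by
      apply IH (m - 1) (by omega) S' _ hS'card
      · intro t ht
        obtain ⟨hroot, ⟨a, haS, hau⟩, _⟩ := hS' t ht
        exact ⟨lt_trans (hroots a haS).1 hau, hroot⟩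
      · have := deriv_support_card q hq0mem
        omega
    have hqC : q = Polynomial.C (q.coeff 0) :=
      Polynomial.eq_C_of_natDegree_eq_zero (Polynomial.natDegree_eq_zero_of_derivative_eq_zero hq')
    have hSne : S.Nonempty := Finset.card_pos.mp (by omega)
    obtain ⟨t, ht⟩ := hSne
    have := heval t ht
    rw [hqC, Polynomial.eval_C] at this
    exact hq0 this

open Finset

lemma base_inj (B : ℕ) : ∀ (n : ℕ) (f g : Fin n → ℕ), (∀ j, f j < B) → (∀ j, g j < B) →
    (∑ j, f j * B ^ (j : ℕ)) = (∑ j, g j * B ^ (j : ℕ)) → f = g := by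
  intro n
  induction n with
  | zero => intro f g _ _ _; funext j; exact absurd j.2 (by omega)
  | succ n IH =>
    intro f g hf hg hsum
    have hB : 0 < B := lt_of_le_of_lt (Nat.zero_le _) (hf 0)
    have expand : ∀ h : Fin (n+1) → ℕ,
        (∑ j, h j * B ^ (j : ℕ)) = h 0 + (∑ j : Fin n, h j.succ * B ^ (j : ℕ)) * B := by
      intro h
      rw [Fin.sum_univ_succ, Finset.sum_mul]
      congr 1
      · simp
      · apply Finset.sum_congr rfl
        intro j _
        rw [Fin.val_succ, pow_succ]
        ring
    rw [expand f, expand g] at hsum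
    have h0 : f 0 = g 0 := by
      have hm := congrArg (· % B) hsum
      simpa [Nat.add_mul_mod_self_right, Nat.mod_eq_of_lt (hf 0), Nat.mod_eq_of_lt (hg 0)] using hm
    have hrest : (∑ j : Fin n, f j.succ * B ^ (j : ℕ)) = ∑ j : Fin n, g j.succ * B ^ (j : ℕ) := by
      rw [h0] at hsum
      have := Nat.add_left_cancel hsum
      exact Nat.eq_of_mul_eq_mul_right hB this
    have hs := IH (fun j => f j.succ) (fun j => g j.succ) (fun j => hf j.succ) (fun j => hg j.succ) hrest
    funext j
    refine Fin.cases h0 (fun i => ?_) j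
    exact congrFun hs i

open Finset

lemma card_finsuppAntidiag_univ (n d : ℕ) :
    ((Finset.finsuppAntidiag (Finset.univ : Finset (Fin n)) d)).card = (n + d - 1).choose d := by
  classical
  rw [← Fintype.card_coe]
  have h1 : ∀ f : Fin n →₀ ℕ, f ∈ Finset.finsuppAntidiag (Finset.univ : Finset (Fin n)) d ↔
      f.sum (fun _ => id) = d := by
    intro f
    rw [Finset.mem_finsuppAntidiag]
    constructor
    · rintro ⟨h, -⟩
      rw [Finsupp.sum_fintype _ _ (fun _ => rfl)]
      exact h
    · intro h
      refine ⟨?_, Finset.subset_univ _⟩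
      rw [Finsupp.sum_fintype _ _ (fun _ => rfl)] at h
      exact h
  have e1 : {f // f ∈ Finset.finsuppAntidiag (Finset.univ : Finset (Fin n)) d} ≃
      Sym (Fin n) d :=
    (Equiv.subtypeEquivRight h1).trans (Sym.equivNatSum (Fin n) d).symm
  rw [Fintype.card_congr e1, Sym.card_sym_eq_choose, Fintype.card_fin]

lemma choose_bound (n d k : ℕ) (hn : 1 ≤ n) (hk : k ≤ (n + d - 1).choose (n - 1)) :
    k ≤ (n + d - 1).choose d := by
  have h1 : d ≤ n + d - 1 := by omega
  have h2 : (n + d - 1) - d = n - 1 := by omega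
  rw [← h2, Nat.choose_symm h1] at hk
  exact hk

open Finset



section
variable {ι : Type*} [Fintype ι] [DecidableEq ι]

/-- If a sparse exponential-sum vanishes at m positive points, it is zero. -/
lemma sparse_vanish (e : ι → ℕ) (he : Function.Injective e) (m : ℕ)
    (c : ι → ℝ) (hsp : (Finset.univ.filter (fun a => c a ≠ 0)).card ≤ m)
    (hv : ∀ j : Fin m, (∑ a, c a * ((j : ℝ) + 1) ^ (e a)) = 0) : c = 0 := by
  classical
  set s := Finset.univ.filter (fun a => c a ≠ 0) with hs
  set P : Polynomial ℝ := ∑ a ∈ s, Polynomial.monomial (e a) (c a) with hP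
  have hPcoeff : ∀ a : ι, P.coeff (e a) = c a := by
    intro a
    by_cases ha : a ∈ s
    · rw [hP, Polynomial.finset_sum_coeff]
      rw [Finset.sum_eq_single a]
      · simp [Polynomial.coeff_monomial]
      · intro b _ hb
        rw [Polynomial.coeff_monomial, if_neg (fun h => hb (he h))]
      · intro h; exact absurd ha h
    · have hca : c a = 0 := by
        by_contra h; exact ha (Finset.mem_filter.mpr ⟨Finset.mem_univ a, h⟩)
      rw [hca, hP, Polynomial.finset_sum_coeff]
      apply Finset.sum_eq_zero
      intro b hb
      rw [Polynomial.coeff_monomial]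
      split
      · next h =>
        exfalso
        have : b = a := he h
        subst this
        exact (Finset.mem_filter.mp hb).2 hca
      · rfl
  have hPsupp : P.support ⊆ s.image e := by
    intro i hi
    rw [Polynomial.mem_support_iff] at hi
    by_contra hni
    apply hi
    rw [hP, Polynomial.finset_sum_coeff]
    apply Finset.sum_eq_zero
    intro b hb
    rw [Polynomial.coeff_monomial, if_neg]
    intro h
    exact hni (Finset.mem_image.mpr ⟨b, hb, h⟩)
  set S : Finset ℝ := Finset.univ.image (fun j : Fin m => (j : ℝ) + 1) with hS
  have hScard : S.card = m := by
    rw [hS, Finset.card_image_of_injective _ (fun i j h => ?_), Finset.card_univ, Fintype.card_fin]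
    have : (i : ℝ) = j := by linarith [h]
    exact Fin.ext (Nat.cast_injective this)
  have hPeval : ∀ t ∈ S, 0 < t ∧ Polynomial.eval t P = 0 := by
    intro t ht
    rw [hS, Finset.mem_image] at ht
    obtain ⟨j, _, rfl⟩ := ht
    constructor
    · positivity
    · rw [hP]
      rw [Polynomial.eval_finset_sum]
      simp only [Polynomial.eval_monomial]
      rw [← hv j]
      rw [Finset.sum_filter]
      apply Finset.sum_congr rfl
      intro a _
      split
      · rfl
      · next h => simp at h; rw [h, zero_mul]
  have hP0 : P = 0 := by
    apply descartes m S P hScard hPeval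
    calc P.support.card ≤ (s.image e).card := Finset.card_le_card hPsupp
    _ ≤ s.card := Finset.card_image_le
    _ ≤ m := hsp
    _ = S.card := hScard.symm
  funext a
  have := hPcoeff a
  rw [hP0] at this
  simpa using this.symm
end

open Finset

section
variable {ι : Type*} [Fintype ι] [DecidableEq ι]



lemma exists_delta (e : ι → ℕ) (he : Function.Injective e) (m : ℕ) (hm : 1 ≤ m)
    (hmcard : m ≤ Fintype.card ι) (hne : Nonempty ι) :
    ∃ δ : ℝ, 0 < δ ∧ ∀ c : ι → ℝ, (Finset.univ.filter (fun a => c a ≠ 0)).card ≤ m →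
      δ * (∑ a, (c a) ^ 2) ≤ ∑ j : Fin m, (∑ a, c a * ((j : ℝ) + 1) ^ (e a)) ^ 2 := by
  classical
  set Φ : (ι → ℝ) → ℝ := fun c => ∑ j : Fin m, (∑ a, c a * ((j : ℝ) + 1) ^ (e a)) ^ 2 with hΦ
  have hΦcont : Continuous Φ := by
    apply continuous_finset_sum
    intro j _
    exact (continuous_finset_sum _ fun a _ => ((continuous_apply a).mul continuous_const)).pow 2
  have hΦnonneg : ∀ c, 0 ≤ Φ c := fun c => Finset.sum_nonneg fun j _ => sq_nonneg _
  set K : Set (ι → ℝ) := {c | (∑ a, (c a) ^ 2) = 1 ∧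
      (Finset.univ.filter (fun a => c a ≠ 0)).card ≤ m} with hK
  -- K is closed
  have hsparse_closed : IsClosed {c : ι → ℝ | (Finset.univ.filter (fun a => c a ≠ 0)).card ≤ m} := by
    have : {c : ι → ℝ | (Finset.univ.filter (fun a => c a ≠ 0)).card ≤ m} =
        ⋃ T ∈ Finset.univ.powersetCard m, {c : ι → ℝ | ∀ a ∉ T, c a = 0} := by
      ext c
      simp only [Set.mem_setOf_eq, Set.mem_iUnion]
      constructor
      · intro h
        obtain ⟨T, hsubT, hTuniv, hTcard⟩ := Finset.exists_subsuperset_card_eq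
          (Finset.subset_univ (Finset.univ.filter (fun a => c a ≠ 0))) h
          (by rw [Finset.card_univ]; exact hmcard)
        refine ⟨T, Finset.mem_powersetCard.mpr ⟨hTuniv, hTcard⟩, ?_⟩
        intro a haT
        by_contra hca
        exact haT (hsubT (Finset.mem_filter.mpr ⟨Finset.mem_univ a, hca⟩))
      · rintro ⟨T, hT, hcT⟩
        have : Finset.univ.filter (fun a => c a ≠ 0) ⊆ T := by
          intro a ha
          by_contra haT
          exact (Finset.mem_filter.mp ha).2 (hcT a haT)
        calc (Finset.univ.filter (fun a => c a ≠ 0)).card ≤ T.card := Finset.card_le_card this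
        _ = m := (Finset.mem_powersetCard.mp hT).2
    rw [this]
    apply isClosed_biUnion_finset
    intro T _
    have : {c : ι → ℝ | ∀ a ∉ T, c a = 0} = ⋂ a ∈ (Finset.univ \ T), {c : ι → ℝ | c a = 0} := by
      ext c
      simp only [Set.mem_setOf_eq, Set.mem_iInter, Finset.mem_sdiff, Finset.mem_univ, true_and]
    rw [this]
    exact isClosed_iInter fun a => isClosed_iInter fun _ =>
      isClosed_eq (continuous_apply a) continuous_const
  have hKclosed : IsClosed K := by
    apply IsClosed.inter _ hsparse_closed
    exact isClosed_eq (continuous_finset_sum _ fun a _ => (continuous_apply a).pow 2) continuous_const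
  have hKbdd : Bornology.IsBounded K := by
    apply Bornology.IsBounded.subset (Metric.isBounded_closedBall (x := (0 : ι → ℝ)) (r := 1))
    intro c hc
    rw [Metric.mem_closedBall, dist_zero_right]
    rw [pi_norm_le_iff_of_nonneg zero_le_one]
    intro a
    rw [Real.norm_eq_abs, abs_le_one_iff_mul_self_le_one, ← sq]
    calc (c a)^2 ≤ ∑ b, (c b)^2 := Finset.single_le_sum (fun b _ => sq_nonneg (c b)) (Finset.mem_univ a)
    _ = 1 := hc.1
  have hKcompact : IsCompact K := Metric.isCompact_of_isClosed_isBounded hKclosed hKbdd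
  have hKne : K.Nonempty := by
    obtain ⟨a₀⟩ := hne
    refine ⟨fun a => if a = a₀ then 1 else 0, ?_, ?_⟩
    · rw [Finset.sum_eq_single a₀] <;> simp +contextual
    · calc (Finset.univ.filter _).card ≤ ({a₀} : Finset ι).card := by
            apply Finset.card_le_card
            intro a ha
            have := (Finset.mem_filter.mp ha).2
            simp only [ne_eq, ite_eq_right_iff, Classical.not_imp] at this
            simp [this.1]
      _ = 1 := Finset.card_singleton a₀
      _ ≤ m := hm
  obtain ⟨c₀, hc₀K, hc₀min'⟩ := hKcompact.exists_isMinOn hKne hΦcont.continuousOn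
  have hc₀min : ∀ c ∈ K, Φ c₀ ≤ Φ c := fun c hc => hc₀min' hc
  have hδpos : 0 < Φ c₀ := by
    rcases lt_or_eq_of_le (hΦnonneg c₀) with h | h
    · exact h
    · exfalso
      have hv : ∀ j : Fin m, (∑ a, c₀ a * ((j : ℝ) + 1) ^ (e a)) = 0 := by
        intro j
        have hsum : ∑ j : Fin m, (∑ a, c₀ a * ((j : ℝ) + 1) ^ (e a)) ^ 2 = 0 := h.symm
        have := (Finset.sum_eq_zero_iff_of_nonneg (fun j _ => sq_nonneg _)).mp hsum j (Finset.mem_univ j)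
        exact (pow_eq_zero_iff two_ne_zero).mp this
      have := sparse_vanish e he m c₀ hc₀K.2 hv
      rw [this] at hc₀K
      simpa using hc₀K.1
  refine ⟨Φ c₀, hδpos, ?_⟩
  intro c hc
  by_cases hc0 : c = 0
  · subst hc0; simp [hΦ]
  · set s := ∑ a, (c a) ^ 2 with hs
    have hspos : 0 < s := by
      rcases Function.ne_iff.mp hc0 with ⟨a, ha⟩
      apply Finset.sum_pos' (fun b _ => sq_nonneg _)
      exact ⟨a, Finset.mem_univ a,
        lt_of_le_of_ne (sq_nonneg _) (Ne.symm (pow_ne_zero 2 ha))⟩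
    set r := (Real.sqrt s)⁻¹ with hr
    have hr2 : r ^ 2 = s⁻¹ := by
      rw [hr, sq, ← mul_inv, Real.mul_self_sqrt hspos.le]
    have hrne : r ≠ 0 := by
      rw [hr]
      exact inv_ne_zero (Real.sqrt_ne_zero'.mpr hspos)
    have hcK : (fun a => r * c a) ∈ K := by
      constructor
      · have : ∑ a, (r * c a)^2 = r^2 * s := by
          rw [hs, Finset.mul_sum]
          exact Finset.sum_congr rfl fun a _ => by ring
        rw [this, hr2, inv_mul_cancel₀ (ne_of_gt hspos)]
      · calc (Finset.univ.filter (fun a => r * c a ≠ 0)).card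
            ≤ (Finset.univ.filter (fun a => c a ≠ 0)).card := by
              apply Finset.card_le_card
              intro a ha
              rw [Finset.mem_filter] at ha ⊢
              exact ⟨ha.1, fun h => ha.2 (by rw [h, mul_zero])⟩
        _ ≤ m := hc
    have hΦscale : Φ (fun a => r * c a) = s⁻¹ * Φ c := by
      rw [hΦ, ← hr2]
      simp only
      rw [Finset.mul_sum]
      apply Finset.sum_congr rfl
      intro j _
      rw [← mul_pow, Finset.mul_sum]
      congr 1
      exact Finset.sum_congr rfl fun a _ => by ring
    have := hc₀min _ hcK
    rw [hΦscale] at this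
    calc Φ c₀ * s ≤ (s⁻¹ * Φ c) * s := by
          apply mul_le_mul_of_nonneg_right this hspos.le
    _ = Φ c := by field_simp
end

open MvPolynomial Finset

def ee (n d : ℕ) : (Fin n →₀ ℕ) → ℕ := fun u => ∑ j : Fin n, u j * (d + 1) ^ (j : ℕ)

noncomputable def ww (n d : ℕ) : (Fin n →₀ ℕ) → ℝ :=
  fun i => ((∏ j, Nat.factorial (i j) : ℕ) : ℝ) / ((2 * d).factorial : ℝ)

noncomputable def PP (n d : ℕ) (t : ℝ) : MvPolynomial (Fin n) ℝ :=
  ∑ u ∈ Finset.finsuppAntidiag (Finset.univ : Finset (Fin n)) (2 * d),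
    MvPolynomial.monomial u (t ^ (ee n d u) / ww n d u)

lemma ww_pos (n d : ℕ) (i : Fin n →₀ ℕ) : 0 < ww n d i := by
  apply div_pos
  · have : 0 < ∏ j, Nat.factorial (i j) := Finset.prod_pos fun j _ => Nat.factorial_pos _
    exact_mod_cast this
  · exact_mod_cast Nat.factorial_pos _

lemma deg_eq_sum_univ {n : ℕ} (u : Fin n →₀ ℕ) : u.degree = ∑ j, u j :=
  Finset.sum_subset (Finset.subset_univ _) (fun j _ hj => Finsupp.notMem_support_iff.mp hj)

lemma mem_antidiag_iff {n : ℕ} (m : ℕ) (u : Fin n →₀ ℕ) :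
    u ∈ Finset.finsuppAntidiag (Finset.univ : Finset (Fin n)) m ↔ u.degree = m := by
  rw [Finset.mem_finsuppAntidiag, deg_eq_sum_univ]
  constructor
  · rintro ⟨h, -⟩; exact h
  · intro h; exact ⟨h, Finset.subset_univ _⟩

lemma supp_sub_antidiag {n : ℕ} {q : MvPolynomial (Fin n) ℝ} {m : ℕ} (hq : q.IsHomogeneous m) :
    q.support ⊆ Finset.finsuppAntidiag (Finset.univ : Finset (Fin n)) m := by
  intro u hu
  rw [mem_antidiag_iff, Finsupp.degree_eq_weight_one]
  exact hq (MvPolynomial.mem_support_iff.mp hu)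

lemma coeff_PP (n d : ℕ) (t : ℝ) (u : Fin n →₀ ℕ) :
    coeff u (PP n d t) =
      if u ∈ Finset.finsuppAntidiag (Finset.univ : Finset (Fin n)) (2 * d) then
        t ^ (ee n d u) / ww n d u else 0 := by
  rw [PP, MvPolynomial.coeff_sum]
  simp only [MvPolynomial.coeff_monomial]
  rw [Finset.sum_ite_eq' _ u (fun x => t ^ (ee n d x) / ww n d x)]

lemma supp_PP (n d : ℕ) (t : ℝ) :
    (PP n d t).support ⊆ Finset.finsuppAntidiag (Finset.univ : Finset (Fin n)) (2 * d) := by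
  intro u hu
  rw [MvPolynomial.mem_support_iff, coeff_PP] at hu
  by_contra h
  rw [if_neg h] at hu
  exact hu rfl

lemma PP_homog (n d : ℕ) (t : ℝ) : (PP n d t).IsHomogeneous (2 * d) := by
  apply MvPolynomial.IsHomogeneous.sum
  intro u hu
  exact MvPolynomial.isHomogeneous_monomial _ ((mem_antidiag_iff (2 * d) u).mp hu)

lemma fischer_sum (n d : ℕ) {p q : MvPolynomial (Fin n) ℝ} {U : Finset (Fin n →₀ ℕ)}
    (hp : p.support ⊆ U) (hq : q.support ⊆ U) :
    fischer n d p q = ∑ i ∈ U, ww n d i * coeff i p * coeff i q := by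
  rw [fischer]
  apply Finset.sum_subset (Finset.union_subset hp hq)
  intro i _ hi
  rcases Finset.notMem_union.mp hi with ⟨h1, _⟩
  rw [MvPolynomial.notMem_support_iff.mp h1, mul_zero, zero_mul]

lemma eval_curve (n d : ℕ) (t : ℝ) (q : MvPolynomial (Fin n) ℝ) :
    MvPolynomial.eval (fun j : Fin n => t ^ ((d + 1) ^ (j : ℕ))) q =
      ∑ i ∈ q.support, coeff i q * t ^ (ee n d i) := by
  rw [MvPolynomial.eval_eq]
  apply Finset.sum_congr rfl
  intro i _
  congr 1
  have h1 : ∏ j ∈ i.support, (t ^ ((d + 1) ^ (j : ℕ))) ^ (i j) =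
      ∏ j : Fin n, (t ^ ((d + 1) ^ (j : ℕ))) ^ (i j) := by
    apply Finset.prod_subset (Finset.subset_univ _)
    intro j _ hj
    rw [Finsupp.notMem_support_iff.mp hj, pow_zero]
  rw [h1]
  have h2 : ∀ j : Fin n, (t ^ ((d + 1) ^ (j : ℕ))) ^ (i j) = t ^ ((i j) * (d + 1) ^ (j : ℕ)) := by
    intro j
    rw [← pow_mul, mul_comm]
  rw [Finset.prod_congr rfl (fun j _ => h2 j), Finset.prod_pow_eq_pow_sum]
  rfl

lemma fischer_PP (n d : ℕ) (t : ℝ) {q : MvPolynomial (Fin n) ℝ}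
    (hq : q.support ⊆ Finset.finsuppAntidiag (Finset.univ : Finset (Fin n)) (2 * d)) :
    fischer n d (PP n d t) q = ∑ i ∈ q.support, coeff i q * t ^ (ee n d i) := by
  rw [fischer_sum n d (supp_PP n d t) hq]
  calc ∑ i ∈ Finset.finsuppAntidiag (Finset.univ : Finset (Fin n)) (2 * d),
        ww n d i * coeff i (PP n d t) * coeff i q
      = ∑ i ∈ Finset.finsuppAntidiag (Finset.univ : Finset (Fin n)) (2 * d),
        coeff i q * t ^ (ee n d i) := by
        apply Finset.sum_congr rfl
        intro i hi
        rw [coeff_PP, if_pos hi]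
        have hw := (ww_pos n d i).ne'
        field_simp
    _ = ∑ i ∈ q.support, coeff i q * t ^ (ee n d i) := by
        refine (Finset.sum_subset hq (fun i _ hi => ?_)).symm
        rw [MvPolynomial.notMem_support_iff.mp hi, zero_mul]

lemma fischer_PP_sq (n d : ℕ) (t : ℝ) {h : MvPolynomial (Fin n) ℝ} (hh : h.IsHomogeneous d) :
    fischer n d (PP n d t) (h ^ 2) =
      (∑ a ∈ Finset.finsuppAntidiag (Finset.univ : Finset (Fin n)) d,
        coeff a h * t ^ (ee n d a)) ^ 2 := by
  have hsq : (h ^ 2).IsHomogeneous (2 * d) := by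
    rw [pow_two, two_mul]
    exact hh.mul hh
  rw [fischer_PP n d t (supp_sub_antidiag hsq), ← eval_curve, map_pow, eval_curve]
  congr 1
  apply Finset.sum_subset (supp_sub_antidiag hh)
  intro i _ hi
  rw [MvPolynomial.notMem_support_iff.mp hi, zero_mul]

lemma fischer_combo (n d m : ℕ) (ts : Fin m → ℝ) (ε t₀ : ℝ)
    {h : MvPolynomial (Fin n) ℝ} (hh : h.IsHomogeneous d) :
    fischer n d ((∑ j : Fin m, PP n d (ts j)) - ε • PP n d t₀) (h ^ 2) =
      (∑ j : Fin m, (∑ a ∈ Finset.finsuppAntidiag (Finset.univ : Finset (Fin n)) d,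
          coeff a h * (ts j) ^ (ee n d a)) ^ 2)
      - ε * (∑ a ∈ Finset.finsuppAntidiag (Finset.univ : Finset (Fin n)) d,
          coeff a h * t₀ ^ (ee n d a)) ^ 2 := by
  classical
  set E := Finset.finsuppAntidiag (Finset.univ : Finset (Fin n)) (2 * d) with hE
  set p : MvPolynomial (Fin n) ℝ := (∑ j : Fin m, PP n d (ts j)) - ε • PP n d t₀ with hp
  have hq2 : (h ^ 2).IsHomogeneous (2 * d) := by
    rw [pow_two, two_mul]; exact hh.mul hh
  have hq2supp : (h ^ 2).support ⊆ E := supp_sub_antidiag hq2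
  have hcoeffp : ∀ i, coeff i p =
      (∑ j : Fin m, coeff i (PP n d (ts j))) - ε * coeff i (PP n d t₀) := by
    intro i
    rw [hp, MvPolynomial.coeff_sub, MvPolynomial.coeff_sum, MvPolynomial.coeff_smul, smul_eq_mul]
  have hpsupp : p.support ⊆ E := by
    intro u hu
    rw [MvPolynomial.mem_support_iff, hcoeffp] at hu
    by_contra hnu
    apply hu
    have hz : ∀ t : ℝ, coeff u (PP n d t) = 0 := by
      intro t
      rw [coeff_PP, if_neg (hE ▸ hnu)]
    simp [hz]
  have expand : ∀ i, ww n d i * coeff i p * coeff i (h^2) =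
      (∑ j : Fin m, ww n d i * coeff i (PP n d (ts j)) * coeff i (h^2))
      - ε * (ww n d i * coeff i (PP n d t₀) * coeff i (h^2)) := by
    intro i
    rw [hcoeffp i, mul_sub, sub_mul, Finset.mul_sum, Finset.sum_mul]
    congr 1
    ring
  calc fischer n d p (h ^ 2)
      = ∑ i ∈ E, ww n d i * coeff i p * coeff i (h^2) := fischer_sum n d hpsupp hq2supp
    _ = ∑ i ∈ E, ((∑ j : Fin m, ww n d i * coeff i (PP n d (ts j)) * coeff i (h^2))
          - ε * (ww n d i * coeff i (PP n d t₀) * coeff i (h^2))) :=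
        Finset.sum_congr rfl fun i _ => expand i
    _ = (∑ i ∈ E, ∑ j : Fin m, ww n d i * coeff i (PP n d (ts j)) * coeff i (h^2))
          - ∑ i ∈ E, ε * (ww n d i * coeff i (PP n d t₀) * coeff i (h^2)) :=
        Finset.sum_sub_distrib _ _
    _ = (∑ j : Fin m, ∑ i ∈ E, ww n d i * coeff i (PP n d (ts j)) * coeff i (h^2))
          - ε * ∑ i ∈ E, ww n d i * coeff i (PP n d t₀) * coeff i (h^2) := by
        rw [Finset.sum_comm, Finset.mul_sum]
    _ = (∑ j : Fin m, fischer n d (PP n d (ts j)) (h^2))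
          - ε * fischer n d (PP n d t₀) (h^2) := by
        rw [← fischer_sum n d (supp_PP n d t₀) hq2supp]
        congr 1
        exact Finset.sum_congr rfl fun j _ =>
          (fischer_sum n d (supp_PP n d (ts j)) hq2supp).symm
    _ = (∑ j : Fin m, (∑ a ∈ Finset.finsuppAntidiag (Finset.univ : Finset (Fin n)) d,
          coeff a h * (ts j) ^ (ee n d a)) ^ 2)
        - ε * (∑ a ∈ Finset.finsuppAntidiag (Finset.univ : Finset (Fin n)) d,
          coeff a h * t₀ ^ (ee n d a)) ^ 2 := by
        rw [fischer_PP_sq n d t₀ hh]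
        congr 1
        exact Finset.sum_congr rfl fun j _ => by rw [fischer_PP_sq n d (ts j) hh]

theorem dual_sigma_strict_antitone (n d k : ℕ) (hn : 2 ≤ n) (hd : 1 ≤ d)
    (hk2 : 2 ≤ k) (hkN : k ≤ Nat.choose (n + d - 1) (n - 1)) :
    DualSigma n d k ⊆ DualSigma n d (k - 1) ∧
    ∃ p : MvPolynomial (Fin n) ℝ, p ∈ DualSigma n d (k - 1) ∧ p ∉ DualSigma n d k := by
  classical
  constructor
  · intro p hp
    exact ⟨hp.1, fun h hh hc => hp.2 h hh (hc.trans (Nat.sub_le k 1))⟩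
  -- setup
  set m := k - 1 with hm
  have hm1 : 1 ≤ m := by omega
  set A : Finset (Fin n →₀ ℕ) := Finset.finsuppAntidiag (Finset.univ : Finset (Fin n)) d with hA
  have hkA : k ≤ A.card := by
    rw [hA, card_finsuppAntidiag_univ]
    exact choose_bound n d k (by omega) hkN
  -- injectivity of ee on A
  have hentry : ∀ u ∈ A, ∀ j : Fin n, u j < d + 1 := by
    intro u hu j
    have hud : u.degree = d := (mem_antidiag_iff d u).mp hu
    have : u j ≤ ∑ j', u j' := Finset.single_le_sum (fun j' _ => Nat.zero_le _) (Finset.mem_univ j)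
    rw [← deg_eq_sum_univ, hud] at this
    omega
  have heinj : ∀ u ∈ A, ∀ u' ∈ A, ee n d u = ee n d u' → u = u' := by
    intro u hu u' hu' h
    have := base_inj (d + 1) n (fun j => u j) (fun j => u' j)
      (hentry u hu) (hentry u' hu') h
    exact DFunLike.coe_injective this
  -- the delta lemma on coordinates indexed by A
  have hAcardm : m ≤ Fintype.card {x // x ∈ A} := by
    rw [Fintype.card_coe]; omega
  have hAne : Nonempty {x // x ∈ A} := by
    have : 0 < A.card := by omega
    obtain ⟨a, ha⟩ := Finset.card_pos.mp this
    exact ⟨⟨a, ha⟩⟩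
  have he'inj : Function.Injective (fun a : {x // x ∈ A} => ee n d ↑a) := by
    intro a b hab
    exact Subtype.ext (heinj _ a.2 _ b.2 hab)
  obtain ⟨δ, hδ, hδbound⟩ := exists_delta (fun a : {x // x ∈ A} => ee n d ↑a) he'inj m hm1 hAcardm hAne
  -- choose k exponents in A
  obtain ⟨T, hTA, hTcard⟩ := Finset.exists_subset_card_eq hkA
  let eqv : {x // x ∈ T} ≃ Fin k := T.equivFin.trans (finCongr hTcard)
  set σ : Fin k → (Fin n →₀ ℕ) := fun i => ↑(eqv.symm i) with hσ
  have hσinj : Function.Injective σ := fun i j h =>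
    eqv.symm.injective (Subtype.ext h)
  have hσmem : ∀ i, σ i ∈ A := fun i => hTA (eqv.symm i).2
  -- dependence
  set v : Fin k → (Fin m → ℝ) := fun i j => ((j : ℝ) + 1) ^ (ee n d (σ i)) with hv
  have hdep : ¬ LinearIndependent ℝ v := by
    intro hli
    have := hli.fintype_card_le_finrank
    rw [Module.finrank_fin_fun, Fintype.card_fin] at this
    omega
  obtain ⟨g, hg0, i₀, hi₀⟩ := Fintype.not_linearIndependent_iff.mp hdep
  have hvj : ∀ j : Fin m, ∑ i, g i * ((j : ℝ) + 1) ^ (ee n d (σ i)) = 0 := by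
    intro j
    have := congrFun hg0 j
    simpa [hv, Finset.sum_apply] using this
  -- the k-term form h₀
  set h₀ : MvPolynomial (Fin n) ℝ := ∑ i : Fin k, MvPolynomial.monomial (σ i) (g i) with hh₀
  have h₀homog : h₀.IsHomogeneous d := by
    apply MvPolynomial.IsHomogeneous.sum
    intro i _
    exact MvPolynomial.isHomogeneous_monomial _ ((mem_antidiag_iff d (σ i)).mp (hσmem i))
  have h₀coeff : ∀ u, coeff u h₀ = ∑ i : Fin k, if σ i = u then g i else 0 := by
    intro u
    rw [hh₀, MvPolynomial.coeff_sum]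
    exact Finset.sum_congr rfl fun i _ => MvPolynomial.coeff_monomial u (σ i) (g i)
  have h₀supp : h₀.support.card ≤ k := by
    have : h₀.support ⊆ Finset.univ.image σ := by
      intro u hu
      rw [MvPolynomial.mem_support_iff, h₀coeff] at hu
      obtain ⟨i, -, hne⟩ := Finset.exists_ne_zero_of_sum_ne_zero hu
      rw [Finset.mem_image]
      refine ⟨i, Finset.mem_univ i, ?_⟩
      by_contra hne'
      rw [if_neg hne'] at hne
      exact hne rfl
    calc h₀.support.card ≤ (Finset.univ.image σ).card := Finset.card_le_card this
    _ ≤ (Finset.univ : Finset (Fin k)).card := Finset.card_image_le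
    _ = k := by rw [Finset.card_univ, Fintype.card_fin]
  have hψ₀ : ∀ t : ℝ, (∑ a ∈ A, coeff a h₀ * t ^ (ee n d a)) =
      ∑ i : Fin k, g i * t ^ (ee n d (σ i)) := by
    intro t
    have : ∀ a ∈ A, coeff a h₀ * t ^ (ee n d a) =
        ∑ i : Fin k, if σ i = a then g i * t ^ (ee n d a) else 0 := by
      intro a _
      rw [h₀coeff, Finset.sum_mul]
      refine Finset.sum_congr rfl fun i _ => ?_
      rw [ite_mul, zero_mul]
    rw [Finset.sum_congr rfl this, Finset.sum_comm]
    apply Finset.sum_congr rfl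
    intro i _
    rw [Finset.sum_ite_eq A (σ i) (fun a => g i * t ^ (ee n d a)), if_pos (hσmem i)]
  -- choose t₀ with ψ₀ t₀ ≠ 0
  set PPoly : Polynomial ℝ := ∑ i : Fin k, Polynomial.monomial (ee n d (σ i)) (g i) with hPPoly
  have hPPolyne : PPoly ≠ 0 := by
    intro h0
    have : PPoly.coeff (ee n d (σ i₀)) = g i₀ := by
      rw [hPPoly, Polynomial.finset_sum_coeff]
      rw [Finset.sum_eq_single i₀]
      · simp [Polynomial.coeff_monomial]
      · intro b _ hb
        rw [Polynomial.coeff_monomial, if_neg]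
        intro hcontra
        exact hb (hσinj (heinj _ (hσmem b) _ (hσmem i₀) hcontra))
      · intro hcontra; exact absurd (Finset.mem_univ i₀) hcontra
    rw [h0] at this
    simp at this
    exact hi₀ this.symm
  have hroots : Set.Finite {x : ℝ | PPoly.IsRoot x} := Polynomial.finite_setOf_isRoot hPPolyne
  obtain ⟨t₀, ht₀⟩ := ((Set.Ioi_infinite (0:ℝ)).diff hroots).nonempty
  have ht₀pos : (0:ℝ) < t₀ := ht₀.1
  have ht₀ne : ∑ i : Fin k, g i * t₀ ^ (ee n d (σ i)) ≠ 0 := by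
    intro h0
    apply ht₀.2
    show PPoly.IsRoot t₀
    rw [Polynomial.IsRoot, hPPoly, Polynomial.eval_finset_sum]
    simpa [Polynomial.eval_monomial] using h0
  -- constants
  set C : ℝ := ∑ a ∈ A, (t₀ ^ (ee n d a)) ^ 2 with hC
  have hCnonneg : 0 ≤ C := Finset.sum_nonneg fun a _ => sq_nonneg _
  set ε : ℝ := δ / (2 * (C + 1)) with hε
  have hεpos : 0 < ε := by
    apply div_pos hδ
    nlinarith
  have hεC : ε * C ≤ δ / 2 := by
    rw [hε, div_mul_eq_mul_div, div_le_div_iff₀ (by nlinarith) (by norm_num)]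
    nlinarith
  -- the polynomial p
  set p : MvPolynomial (Fin n) ℝ :=
    (∑ j : Fin m, PP n d ((j : ℝ) + 1)) - ε • PP n d t₀ with hp
  have hphomog : p.IsHomogeneous (2 * d) := by
    rw [hp, MvPolynomial.smul_eq_C_mul]
    exact ((MvPolynomial.IsHomogeneous.sum _ _ _ fun j _ => PP_homog n d _).sub
      ((PP_homog n d t₀).C_mul ε))
  -- the key fischer formula
  have hfischer : ∀ h : MvPolynomial (Fin n) ℝ, h.IsHomogeneous d →
      fischer n d p (h ^ 2) =
        (∑ j : Fin m, (∑ a ∈ A, coeff a h * ((j : ℝ) + 1) ^ (ee n d a)) ^ 2)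
        - ε * (∑ a ∈ A, coeff a h * t₀ ^ (ee n d a)) ^ 2 := by
    intro h hh
    rw [hp, hA]
    exact fischer_combo n d m (fun j => (j : ℝ) + 1) ε t₀ hh
  refine ⟨p, ⟨hphomog, ?_⟩, ?_⟩
  · -- membership in DualSigma n d (k-1)
    intro h hh hcard
    rw [hfischer h hh]
    set c : {x // x ∈ A} → ℝ := fun a => coeff ↑a h with hc
    have hsum_eq : ∀ t : ℝ, (∑ a ∈ A, coeff a h * t ^ (ee n d a)) =
        ∑ a : {x // x ∈ A}, c a * t ^ (ee n d ↑a) :=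
      fun t => (Finset.sum_coe_sort A (fun a => coeff a h * t ^ (ee n d a))).symm
    have hsparse : (Finset.univ.filter (fun a : {x // x ∈ A} => c a ≠ 0)).card ≤ m := by
      have hsub : ∀ a ∈ Finset.univ.filter (fun a : {x // x ∈ A} => c a ≠ 0),
          (a : Fin n →₀ ℕ) ∈ h.support := by
        intro a ha
        rw [MvPolynomial.mem_support_iff]
        exact (Finset.mem_filter.mp ha).2
      calc (Finset.univ.filter (fun a : {x // x ∈ A} => c a ≠ 0)).card
          ≤ h.support.card := Finset.card_le_card_of_injOn Subtype.val hsub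
            (fun a _ b _ hab => Subtype.ext hab)
      _ ≤ m := hcard
    have hlow := hδbound c hsparse
    have hCS : (∑ a ∈ A, coeff a h * t₀ ^ (ee n d a)) ^ 2 ≤
        (∑ a : {x // x ∈ A}, (c a) ^ 2) * C := by
      have := Finset.sum_mul_sq_le_sq_mul_sq A (fun a => coeff a h) (fun a => t₀ ^ (ee n d a))
      calc (∑ a ∈ A, coeff a h * t₀ ^ (ee n d a)) ^ 2
          ≤ (∑ a ∈ A, (coeff a h) ^ 2) * (∑ a ∈ A, (t₀ ^ (ee n d a)) ^ 2) := this
      _ = (∑ a : {x // x ∈ A}, (c a) ^ 2) * C := by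
          rw [hC, Finset.sum_coe_sort A (fun a => (coeff a h) ^ 2)]
    set s := ∑ a : {x // x ∈ A}, (c a) ^ 2 with hs
    have hsnonneg : 0 ≤ s := Finset.sum_nonneg fun a _ => sq_nonneg _
    have hsum_ge : δ * s ≤ ∑ j : Fin m, (∑ a ∈ A, coeff a h * ((j:ℝ)+1) ^ (ee n d a)) ^ 2 := by
      calc δ * s ≤ ∑ j : Fin m, (∑ a : {x // x ∈ A}, c a * ((j:ℝ)+1) ^ (ee n d ↑a)) ^ 2 := hlow
      _ = ∑ j : Fin m, (∑ a ∈ A, coeff a h * ((j:ℝ)+1) ^ (ee n d a)) ^ 2 := by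
          apply Finset.sum_congr rfl
          intro j _
          rw [hsum_eq]
    rw [hsum_eq t₀]
    have h1 : ε * (∑ a : {x // x ∈ A}, c a * t₀ ^ (ee n d ↑a)) ^ 2 ≤ ε * (s * C) := by
      apply mul_le_mul_of_nonneg_left _ hεpos.le
      rw [← hsum_eq t₀]
      exact hCS
    nlinarith [mul_le_mul_of_nonneg_right hεC hsnonneg]
  · -- non-membership in DualSigma n d k
    intro hmem
    have := hmem.2 h₀ h₀homog h₀supp
    rw [hfischer h₀ h₀homog] at this
    have hzero : ∀ j : Fin m, (∑ a ∈ A, coeff a h₀ * ((j:ℝ)+1) ^ (ee n d a)) = 0 := by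
      intro j
      rw [hψ₀]
      exact hvj j
    have hneg : (∑ j : Fin m, (∑ a ∈ A, coeff a h₀ * ((j:ℝ)+1) ^ (ee n d a)) ^ 2)
        - ε * (∑ a ∈ A, coeff a h₀ * t₀ ^ (ee n d a)) ^ 2 < 0 := by
      have h1 : (∑ j : Fin m, (∑ a ∈ A, coeff a h₀ * ((j:ℝ)+1) ^ (ee n d a)) ^ 2) = 0 := by
        apply Finset.sum_eq_zero
        intro j _
        rw [hzero j, pow_two, mul_zero]
      rw [h1, hψ₀ t₀]
      have h2 : 0 < (∑ i : Fin k, g i * t₀ ^ (ee n d (σ i))) ^ 2 :=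
        lt_of_le_of_ne (sq_nonneg _) (Ne.symm (pow_ne_zero 2 ht₀ne))
      nlinarith
    linarith
end
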